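/- arXiv:1811.01536 — 7 statements merged into one kernel-verified Lean document; each statement's English description precedes it below -/
import Mathlib

section
/- The space of conjugacy classes of pairs (A, B) ∈ SU(2) × SU(2) with [A,B] = -1 (where [A,B] = ABA⁻¹B⁻¹) is a single point, represented by (A,B) = (i σ_x, i σ_z). -/
open Matrix

noncomputable section

def σx : Matrix (Fin 2) (Fin 2) ℂ := !![0, 1; 1, 0]
def σz : Matrix (Fin 2) (Fin 2) ℂ := !![1, 0; 0, -1]

abbrev SU2 := Matrix.specialUnitaryGroup (Fin 2) ℂ

open Complex

set_option maxHeartbeats 1000000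

lemma mem_su2_iff (M : Matrix (Fin 2) (Fin 2) ℂ) :
    M ∈ Matrix.specialUnitaryGroup (Fin 2) ℂ ↔
    ∃ a b : ℂ, a * (starRingEnd ℂ) a + b * (starRingEnd ℂ) b = 1 ∧
      M = !![a, b; -(starRingEnd ℂ) b, (starRingEnd ℂ) a] := by
  rw [Matrix.mem_specialUnitaryGroup_iff]
  constructor
  · rintro ⟨hu, hd⟩
    rw [Matrix.mem_unitaryGroup_iff] at hu
    have hinv : M⁻¹ = star M := Matrix.inv_eq_right_inv hu
    have hadj : star M = M.adjugate := by
      rw [← hinv, Matrix.inv_def, hd]; simp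
    have h11 : M 1 1 = (starRingEnd ℂ) (M 0 0) := by
      have := congrFun (congrFun hadj 0) 0
      simp [Matrix.star_apply, Matrix.adjugate_fin_two, star] at this; exact this.symm
    have h10 : M 1 0 = -(starRingEnd ℂ) (M 0 1) := by
      have := congrFun (congrFun hadj 1) 0
      simp [Matrix.star_apply, Matrix.adjugate_fin_two] at this
      linear_combination this
    refine ⟨M 0 0, M 0 1, ?_, ?_⟩
    · rw [Matrix.det_fin_two] at hd
      rw [← h11]
      linear_combination hd + (M 0 1) * h10
    · ext i j
      fin_cases i <;> fin_cases j <;> simp [h11, h10]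
  · rintro ⟨a, b, hab, rfl⟩
    constructor
    · rw [Matrix.mem_unitaryGroup_iff]
      ext i j
      fin_cases i <;> fin_cases j <;>
        simp [Matrix.mul_apply, Fin.sum_univ_two, Matrix.one_apply, star_apply, mul_comm] <;>
        linear_combination hab
    · simp [Matrix.det_fin_two]
      linear_combination hab


lemma step1 (a b : ℂ) (hab : a * (starRingEnd ℂ) a + b * (starRingEnd ℂ) b = 1)
    (ha : (starRingEnd ℂ) a = -a) :
    ∃ g ∈ Matrix.specialUnitaryGroup (Fin 2) ℂ,
      g * !![a, b; -(starRingEnd ℂ) b, (starRingEnd ℂ) a] * star g = !![I, 0; 0, -I] := by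
  by_cases hb : b = 0
  · subst hb
    have ha2 : (a - I) * (a + I) = 0 := by
      have h0 : a * a = -1 := by
        rw [ha] at hab
        simp at hab
        linear_combination -hab
      linear_combination h0 - Complex.I_sq
    rcases mul_eq_zero.1 ha2 with h | h
    · have haI : a = I := by linear_combination h
      refine ⟨1, one_mem _, ?_⟩
      subst haI
      ext i j
      fin_cases i <;> fin_cases j <;>
        simp [Matrix.mul_apply, Fin.sum_univ_two, Complex.conj_I]
    · have haI : a = -I := by linear_combination h
      refine ⟨!![0, 1; -1, 0], ?_, ?_⟩
      · rw [mem_su2_iff]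
        exact ⟨0, 1, by norm_num, by ext i j; fin_cases i <;> fin_cases j <;> simp⟩
      · subst haI
        ext i j
        fin_cases i <;> fin_cases j <;>
          simp [Matrix.mul_apply, Fin.sum_univ_two, Matrix.star_apply, Complex.conj_I]
  · obtain ⟨τ, hτa⟩ : ∃ τ : ℝ, a = (τ:ℂ) * I := by
      refine ⟨a.im, ?_⟩
      have h1 : a.re = 0 := by
        have := congrArg Complex.re ha
        simp at this; linarith
      apply Complex.ext <;> simp [h1]
    have hreal : τ^2 + Complex.normSq b = 1 := by
      have h2 : ((τ^2 + Complex.normSq b : ℝ) : ℂ) = ((1:ℝ) : ℂ) := by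
        push_cast
        rw [← Complex.mul_conj]
        linear_combination hab - a * ha + (Complex.I*(τ:ℂ) + a) * hτa + (τ:ℂ)^2 * Complex.I_sq
      exact_mod_cast h2
    have hτlt : τ < 1 := by
      nlinarith [Complex.normSq_pos.2 hb]
    have h2τ : (0:ℝ) < 2*(1-τ) := by linarith
    set r : ℝ := Real.sqrt (2*(1-τ)) with hrdef
    have hrpos : 0 < r := Real.sqrt_pos.2 h2τ
    have hrne : (r:ℂ) ≠ 0 := by exact_mod_cast hrpos.ne'
    have hr2 : r^2 = 2*(1-τ) := Real.sq_sqrt h2τ.le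
    have h3 : (r:ℂ)^2 = 2*(1-(τ:ℂ)) := by exact_mod_cast congrArg (fun x:ℝ => (x:ℂ)) hr2
    have hr2c : (r:ℂ)^2 = 2 + 2*I*a := by
      linear_combination h3 + (-2*Complex.I) * hτa + (-2*(τ:ℂ)) * Complex.I_sq
    have hab' : b * (starRingEnd ℂ) b = 1 + a^2 := by linear_combination hab - a * ha
    refine ⟨!![(starRingEnd ℂ) b * (r:ℂ)⁻¹, (a - I) * (r:ℂ)⁻¹;
              (a - I) * (r:ℂ)⁻¹, b * (r:ℂ)⁻¹], ?_, ?_⟩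
    · rw [mem_su2_iff]
      refine ⟨(starRingEnd ℂ) b * (r:ℂ)⁻¹, (a - I) * (r:ℂ)⁻¹, ?_, ?_⟩
      · simp only [_root_.map_mul, map_sub, map_inv₀, Complex.conj_I, Complex.conj_ofReal,
          RingHomCompTriple.comp_apply, RingHom.id_apply, starRingEnd_self_apply]
        field_simp
        linear_combination (-Complex.I + a) * ha + (-1:ℂ) * Complex.I_sq - hr2c + hab'
      · ext i j
        fin_cases i <;> fin_cases j <;>
          simp [_root_.map_mul, map_sub, map_inv₀, Complex.conj_I, Complex.conj_ofReal, ha] <;>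
          ring
    · ext i j
      fin_cases i <;> fin_cases j <;>
        simp only [Matrix.mul_apply, Fin.sum_univ_two, Matrix.star_apply, Matrix.cons_val',
          Matrix.cons_val_zero, Matrix.cons_val_one, Matrix.head_cons, Matrix.head_fin_const,
          Matrix.empty_val', Matrix.cons_val_fin_one, Matrix.star_eq_conjTranspose, Matrix.conjTranspose_apply,
          Matrix.of_apply, Complex.star_def, map_div₀, Fin.zero_eta, Fin.mk_one, Matrix.cons_val, Fin.isValue, _root_.map_mul, map_sub, map_inv₀,
          Complex.conj_I, Complex.conj_ofReal, RingHomCompTriple.comp_apply,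
          RingHom.id_apply, starRingEnd_self_apply] <;>
        field_simp
      · linear_combination (-Complex.I*((starRingEnd ℂ) a) - Complex.I^2 + b*((starRingEnd ℂ) b) + a*((starRingEnd ℂ) a) + 2*a*Complex.I - a^2) * ha + (-a) * Complex.I_sq + (-Complex.I) * hr2c + (2*Complex.I - a) * hab'
      · linear_combination (a*((starRingEnd ℂ) b)) * ha + (((starRingEnd ℂ) b)) * Complex.I_sq + (((starRingEnd ℂ) b)) * hab'
      · linear_combination (b*((starRingEnd ℂ) a)) * ha + (-b) * Complex.I_sq + (-b) * hab'
      · linear_combination (-(a*Complex.I) + a^2) * ha + a * Complex.I_sq + Complex.I * hr2c + (-(2*Complex.I) + a) * hab'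


lemma step2 (q : ℂ) (hq : q * (starRingEnd ℂ) q = 1) :
    ∃ g ∈ Matrix.specialUnitaryGroup (Fin 2) ℂ,
      g * !![0, q; -(starRingEnd ℂ) q, 0] * star g = !![0, I; I, 0] ∧
      g * !![I, 0; 0, -I] * star g = !![I, 0; 0, -I] := by
  have hqne : q ≠ 0 := by
    intro h; rw [h] at hq; simp at hq
  have hwne : I * (starRingEnd ℂ) q ≠ 0 := by
    simp [hqne]
  set μ : ℂ := Complex.exp (Complex.log (I * (starRingEnd ℂ) q) / 2) with hμdef
  have hμ2 : μ^2 = I * (starRingEnd ℂ) q := by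
    rw [hμdef, sq, ← Complex.exp_add, add_halves]
    exact Complex.exp_log hwne
  have hμ2c : ((starRingEnd ℂ) μ)^2 = -I * q := by
    have := congrArg (starRingEnd ℂ) hμ2
    simp only [map_pow, _root_.map_mul, Complex.conj_I, starRingEnd_self_apply] at this
    linear_combination this
  have hμ1 : μ * (starRingEnd ℂ) μ = 1 := by
    have hsq : (Complex.normSq μ : ℂ)^2 = 1 := by
      rw [← Complex.mul_conj]
      linear_combination ((starRingEnd ℂ) μ)^2 * hμ2 + Complex.I * ((starRingEnd ℂ) q) * hμ2c
        - Complex.I^2 * hq - Complex.I_sq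
    have h2 : (Complex.normSq μ)^2 = 1 := by exact_mod_cast hsq
    have h3 : Complex.normSq μ = 1 := by nlinarith [Complex.normSq_nonneg μ]
    rw [Complex.mul_conj, h3]; simp
  refine ⟨!![μ, 0; 0, (starRingEnd ℂ) μ], ?_, ?_, ?_⟩
  · rw [mem_su2_iff]
    exact ⟨μ, 0, by simpa using hμ1, by ext i j; fin_cases i <;> fin_cases j <;> simp⟩
  · ext i j
    fin_cases i <;> fin_cases j <;>
      simp [Matrix.mul_apply, Fin.sum_univ_two, Matrix.star_apply]
    · linear_combination q * hμ2 + Complex.I * hq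
    · linear_combination -(starRingEnd ℂ) q * hμ2c + Complex.I * hq
  · ext i j
    fin_cases i <;> fin_cases j <;>
      simp [Matrix.mul_apply, Fin.sum_univ_two, Matrix.star_apply]
    · linear_combination Complex.I * hμ1
    · linear_combination Complex.I * hμ1


lemma step3 :
    ∃ g ∈ Matrix.specialUnitaryGroup (Fin 2) ℂ,
      g * !![I, 0; 0, -I] * star g = !![0, I; I, 0] ∧
      g * !![0, I; I, 0] * star g = !![I, 0; 0, -I] := by
  set s : ℝ := Real.sqrt 2 with hsdef
  have hs2 : (s:ℂ)^2 = 2 := by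
    have : s^2 = 2 := Real.sq_sqrt (by norm_num)
    exact_mod_cast congrArg (fun x:ℝ => (x:ℂ)) this
  have hspos : 0 < s := Real.sqrt_pos.2 (by norm_num)
  have hsne : (s:ℂ) ≠ 0 := by exact_mod_cast hspos.ne'
  refine ⟨!![I * (s:ℂ)⁻¹, I * (s:ℂ)⁻¹; I * (s:ℂ)⁻¹, -I * (s:ℂ)⁻¹], ?_, ?_, ?_⟩
  · rw [mem_su2_iff]
    refine ⟨I * (s:ℂ)⁻¹, I * (s:ℂ)⁻¹, ?_, ?_⟩
    · simp only [_root_.map_mul, map_inv₀, Complex.conj_I, Complex.conj_ofReal]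
      field_simp
      linear_combination -hs2 + (-2:ℂ) * Complex.I_sq
    · ext i j
      fin_cases i <;> fin_cases j <;>
        simp [_root_.map_mul, map_inv₀, Complex.conj_I, Complex.conj_ofReal] <;> ring
  · ext i j
    fin_cases i <;> fin_cases j <;>
      simp only [Matrix.mul_apply, Fin.sum_univ_two, Matrix.star_apply, Matrix.cons_val',
        Matrix.cons_val_zero, Matrix.cons_val_one, Matrix.head_cons, Matrix.head_fin_const,
        Matrix.empty_val', Matrix.cons_val_fin_one, Matrix.star_eq_conjTranspose, Matrix.conjTranspose_apply,
          Matrix.of_apply, Complex.star_def, map_div₀, Fin.zero_eta, Fin.mk_one, Matrix.cons_val, Fin.isValue, _root_.map_mul, map_inv₀, map_neg,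
        Complex.conj_I, Complex.conj_ofReal, RingHomCompTriple.comp_apply,
        RingHom.id_apply, starRingEnd_self_apply] <;>
      field_simp
    · linear_combination
    · linear_combination -hs2 - 2 * Complex.I_sq
    · linear_combination -hs2 - 2 * Complex.I_sq
    · linear_combination
  · ext i j
    fin_cases i <;> fin_cases j <;>
      simp only [Matrix.mul_apply, Fin.sum_univ_two, Matrix.star_apply, Matrix.cons_val',
        Matrix.cons_val_zero, Matrix.cons_val_one, Matrix.head_cons, Matrix.head_fin_const,
        Matrix.empty_val', Matrix.cons_val_fin_one, Matrix.star_eq_conjTranspose, Matrix.conjTranspose_apply,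
          Matrix.of_apply, Complex.star_def, map_div₀, Fin.zero_eta, Fin.mk_one, Matrix.cons_val, Fin.isValue, _root_.map_mul, map_inv₀, map_neg,
        Complex.conj_I, Complex.conj_ofReal, RingHomCompTriple.comp_apply,
        RingHom.id_apply, starRingEnd_self_apply] <;>
      field_simp
    · linear_combination -hs2 - 2 * Complex.I_sq
    · linear_combination
    · linear_combination
    · linear_combination hs2 + 2 * Complex.I_sq


lemma su2_star_mem {M : Matrix (Fin 2) (Fin 2) ℂ}
    (h : M ∈ Matrix.specialUnitaryGroup (Fin 2) ℂ) :
    star M ∈ Matrix.specialUnitaryGroup (Fin 2) ℂ := by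
  obtain ⟨a, b, hab, rfl⟩ := (mem_su2_iff _).1 h
  rw [mem_su2_iff]
  refine ⟨(starRingEnd ℂ) a, -b, ?_, ?_⟩
  · simp only [map_neg, starRingEnd_self_apply]
    linear_combination hab
  · ext i j
    fin_cases i <;> fin_cases j <;> simp [Matrix.star_apply]


lemma su2_unitary {M : Matrix (Fin 2) (Fin 2) ℂ}
    (h : M ∈ Matrix.specialUnitaryGroup (Fin 2) ℂ) :
    M * star M = 1 ∧ star M * M = 1 := by
  have hu := (Matrix.mem_specialUnitaryGroup_iff.1 h).1
  exact ⟨Matrix.mem_unitaryGroup_iff.1 hu, Matrix.mem_unitaryGroup_iff'.1 hu⟩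


lemma su2_inv_eq_star {M : Matrix (Fin 2) (Fin 2) ℂ}
    (h : M ∈ Matrix.specialUnitaryGroup (Fin 2) ℂ) : M⁻¹ = star M :=
  Matrix.inv_eq_right_inv (su2_unitary h).1


lemma conj_mul_conj (g X Y : Matrix (Fin 2) (Fin 2) ℂ) (hg : star g * g = 1) :
    (g * X * star g) * (g * Y * star g) = g * (X * Y) * star g := by
  have h1 : (g * X * star g) * (g * Y * star g)
      = g * X * (star g * g) * (Y * star g) := by
    simp only [Matrix.mul_assoc]
  rw [h1, hg]
  simp only [Matrix.mul_one, Matrix.mul_assoc]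


lemma conj_comp (g h M : Matrix (Fin 2) (Fin 2) ℂ) :
    (g * h) * M * star (g * h) = g * (h * M * star h) * star g := by
  rw [Matrix.star_mul]
  simp only [Matrix.mul_assoc]

lemma Ix_eq : Complex.I • σx = !![0, I; I, 0] := by
  ext i j; fin_cases i <;> fin_cases j <;> simp [σx]

lemma Iz_eq : Complex.I • σz = !![I, 0; 0, -I] := by
  ext i j; fin_cases i <;> fin_cases j <;> simp [σz]

/-- The space of conjugacy classes of pairs `(A,B) ∈ SU(2)²` with `[A,B] = -1` is a
single point, represented by `(i σx, i σz)`: the representative satisfies the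
relation, and any pair satisfying it is simultaneously conjugate to it. -/
theorem commutator_neg_one_unique_class :
    (Complex.I • σx ∈ Matrix.specialUnitaryGroup (Fin 2) ℂ ∧
     Complex.I • σz ∈ Matrix.specialUnitaryGroup (Fin 2) ℂ ∧
     (Complex.I • σx) * (Complex.I • σz) * (Complex.I • σx)⁻¹ * (Complex.I • σz)⁻¹ =
       -(1 : Matrix (Fin 2) (Fin 2) ℂ)) ∧
    (∀ A B : SU2,
      (A : Matrix (Fin 2) (Fin 2) ℂ) * B * (A : Matrix (Fin 2) (Fin 2) ℂ)⁻¹ *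
          (B : Matrix (Fin 2) (Fin 2) ℂ)⁻¹ = -(1 : Matrix (Fin 2) (Fin 2) ℂ) →
      ∃ g : SU2,
        (g : Matrix (Fin 2) (Fin 2) ℂ) * A * (g : Matrix (Fin 2) (Fin 2) ℂ)⁻¹ =
          Complex.I • σx ∧
        (g : Matrix (Fin 2) (Fin 2) ℂ) * B * (g : Matrix (Fin 2) (Fin 2) ℂ)⁻¹ =
          Complex.I • σz) := by
  have hxmem : Complex.I • σx ∈ Matrix.specialUnitaryGroup (Fin 2) ℂ := by
    rw [Ix_eq, mem_su2_iff]
    refine ⟨0, I, by simp [Complex.conj_I], ?_⟩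
    ext i j; fin_cases i <;> fin_cases j <;> simp [Complex.conj_I]
  have hzmem : Complex.I • σz ∈ Matrix.specialUnitaryGroup (Fin 2) ℂ := by
    rw [Iz_eq, mem_su2_iff]
    refine ⟨I, 0, by simp [Complex.conj_I], ?_⟩
    ext i j; fin_cases i <;> fin_cases j <;> simp [Complex.conj_I]
  constructor
  · refine ⟨hxmem, hzmem, ?_⟩
    have hxinv : (Complex.I • σx)⁻¹ = !![0, -I; -I, 0] := by
      apply Matrix.inv_eq_right_inv
      rw [Ix_eq]
      ext i j
      fin_cases i <;> fin_cases j <;>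
        simp [Matrix.mul_apply, Fin.sum_univ_two, Matrix.one_apply, Complex.I_mul_I]
    have hzinv : (Complex.I • σz)⁻¹ = !![-I, 0; 0, I] := by
      apply Matrix.inv_eq_right_inv
      rw [Iz_eq]
      ext i j
      fin_cases i <;> fin_cases j <;>
        simp [Matrix.mul_apply, Fin.sum_univ_two, Matrix.one_apply, Complex.I_mul_I]
    rw [hxinv, hzinv, Ix_eq, Iz_eq]
    ext i j
    fin_cases i <;> fin_cases j <;>
      simp [Matrix.mul_apply, Fin.sum_univ_two, Matrix.one_apply, Complex.I_mul_I]
  · intro A B hcomm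
    have hA1 := (su2_unitary A.2).1
    have hA1' := (su2_unitary A.2).2
    have hB1 := (su2_unitary B.2).1
    have hB1' := (su2_unitary B.2).2
    rw [su2_inv_eq_star A.2, su2_inv_eq_star B.2] at hcomm
    -- derive anticommutation
    have h1 := congrArg (fun M => M * (B : Matrix (Fin 2) (Fin 2) ℂ)) hcomm
    simp only [Matrix.mul_assoc] at h1
    rw [hB1'] at h1
    simp only [Matrix.mul_one] at h1
    have h2 := congrArg (fun M => M * (A : Matrix (Fin 2) (Fin 2) ℂ)) h1
    simp only [Matrix.mul_assoc] at h2
    rw [hA1'] at h2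
    simp only [Matrix.mul_one, Matrix.neg_mul, Matrix.one_mul] at h2
    -- h2 : A * B = -(B * A)  (hopefully)
    have hanti : (A : Matrix (Fin 2) (Fin 2) ℂ) * B = -((B : Matrix (Fin 2) (Fin 2) ℂ) * A) := h2
    have hanti' : (B : Matrix (Fin 2) (Fin 2) ℂ) * A = -((A : Matrix (Fin 2) (Fin 2) ℂ) * B) := by
      rw [hanti]; simp
    -- traces vanish
    have htrA : Matrix.trace (A : Matrix (Fin 2) (Fin 2) ℂ) = 0 := by
      have e1 : (B : Matrix (Fin 2) (Fin 2) ℂ) * A * star (B : Matrix (Fin 2) (Fin 2) ℂ)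
          = -(A : Matrix (Fin 2) (Fin 2) ℂ) := by
        rw [hanti']
        simp only [Matrix.neg_mul, Matrix.mul_assoc, hB1, Matrix.mul_one]
      have e2 := congrArg Matrix.trace e1
      rw [Matrix.trace_mul_comm, ← Matrix.mul_assoc, hB1', Matrix.one_mul, Matrix.trace_neg] at e2
      linear_combination e2 / 2
    have htrB : Matrix.trace (B : Matrix (Fin 2) (Fin 2) ℂ) = 0 := by
      have e1 : (A : Matrix (Fin 2) (Fin 2) ℂ) * B * star (A : Matrix (Fin 2) (Fin 2) ℂ)
          = -(B : Matrix (Fin 2) (Fin 2) ℂ) := by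
        rw [hanti]
        simp only [Matrix.neg_mul, Matrix.mul_assoc, hA1, Matrix.mul_one]
      have e2 := congrArg Matrix.trace e1
      rw [Matrix.trace_mul_comm, ← Matrix.mul_assoc, hA1', Matrix.one_mul, Matrix.trace_neg] at e2
      linear_combination e2 / 2
    -- coordinates for A
    obtain ⟨a, b, hab, hAeq⟩ := (mem_su2_iff _).1 A.2
    have ha : (starRingEnd ℂ) a = -a := by
      rw [hAeq] at htrA
      simp [Matrix.trace_fin_two] at htrA
      linear_combination htrA
    obtain ⟨g₁, hg₁m, hg₁⟩ := step1 a b hab ha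
    have hg₁u := su2_unitary hg₁m
    have hg₁A : g₁ * (A : Matrix (Fin 2) (Fin 2) ℂ) * star g₁ = !![I, 0; 0, -I] := by
      rw [hAeq]; exact hg₁
    set B₁ : Matrix (Fin 2) (Fin 2) ℂ := g₁ * (B : Matrix (Fin 2) (Fin 2) ℂ) * star g₁ with hB₁def
    have hB₁mem : B₁ ∈ Matrix.specialUnitaryGroup (Fin 2) ℂ :=
      Submonoid.mul_mem _ (Submonoid.mul_mem _ hg₁m B.2) (su2_star_mem hg₁m)
    have hanti₁ : !![I, 0; 0, -I] * B₁ = -(B₁ * !![I, 0; 0, -I]) := by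
      rw [← hg₁A, hB₁def, conj_mul_conj _ _ _ hg₁u.2, conj_mul_conj _ _ _ hg₁u.2, hanti]
      simp only [Matrix.neg_mul, Matrix.mul_neg]
    obtain ⟨p, q, hpq, hB₁eq⟩ := (mem_su2_iff _).1 hB₁mem
    have hp : p = 0 := by
      rw [hB₁eq] at hanti₁
      have h00 := congrFun (congrFun hanti₁ 0) 0
      simp [Matrix.mul_apply, Fin.sum_univ_two] at h00
      linear_combination (-Complex.I/2) * h00 + p * Complex.I_sq
    have hq1 : q * (starRingEnd ℂ) q = 1 := by
      rw [hp] at hpq; simpa using hpq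
    have hB₁eq' : B₁ = !![0, q; -(starRingEnd ℂ) q, 0] := by
      rw [hB₁eq, hp]
      ext i j; fin_cases i <;> fin_cases j <;> simp
    obtain ⟨g₂, hg₂m, hg₂B, hg₂z⟩ := step2 q hq1
    obtain ⟨g₃, hg₃m, hg₃z, hg₃x⟩ := step3
    have hg₂u := su2_unitary hg₂m
    have hg₃u := su2_unitary hg₃m
    set G : Matrix (Fin 2) (Fin 2) ℂ := g₃ * g₂ * g₁ with hGdef
    have hGmem : G ∈ Matrix.specialUnitaryGroup (Fin 2) ℂ :=
      Submonoid.mul_mem _ (Submonoid.mul_mem _ hg₃m hg₂m) hg₁m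
    have hGA : G * (A : Matrix (Fin 2) (Fin 2) ℂ) * star G = !![0, I; I, 0] := by
      rw [hGdef, conj_comp, hg₁A, conj_comp, hg₂z, hg₃z]
    have hGB : G * (B : Matrix (Fin 2) (Fin 2) ℂ) * star G = !![I, 0; 0, -I] := by
      rw [hGdef, conj_comp, ← hB₁def, conj_comp, hB₁eq', hg₂B, hg₃x]
    refine ⟨⟨G, hGmem⟩, ?_, ?_⟩
    · rw [Ix_eq]
      show G * (A : Matrix (Fin 2) (Fin 2) ℂ) * G⁻¹ = _
      rw [su2_inv_eq_star hGmem]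
      exact hGA
    · rw [Iz_eq]
      show G * (B : Matrix (Fin 2) (Fin 2) ℂ) * G⁻¹ = _
      rw [su2_inv_eq_star hGmem]
      exact hGB
end
end

section
/- For A = r cos α + i σ_x √(1-r²) + i σ_z r sin α and B = cos β + i σ_z sin β with r ∈ [0,1), β ∈ (0,π), the commutator satisfies (1/2) tr([A,B]) = r² + (1-r²) cos 2β, where [A,B] = ABA⁻¹B⁻¹. -/
open Matrix

noncomputable section

/-- For `A = r cos α + i σx √(1-r²) + i σz r sin α`, `B = cos β + i σz sin β`
with `r ∈ [0,1)`, `β ∈ (0,π)`, one has `(1/2) tr([A,B]) = r² + (1-r²) cos 2β`. -/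
theorem half_trace_commutator (r α β : ℝ) (hr : r ∈ Set.Ico (0 : ℝ) 1)
    (hβ : β ∈ Set.Ioo (0 : ℝ) Real.pi)
    (A B : Matrix (Fin 2) (Fin 2) ℂ)
    (hA : A = ((r * Real.cos α : ℝ) : ℂ) • (1 : Matrix (Fin 2) (Fin 2) ℂ) +
      (Complex.I * ((Real.sqrt (1 - r ^ 2) : ℝ) : ℂ)) • σx +
      (Complex.I * ((r * Real.sin α : ℝ) : ℂ)) • σz)
    (hB : B = ((Real.cos β : ℝ) : ℂ) • (1 : Matrix (Fin 2) (Fin 2) ℂ) +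
      (Complex.I * ((Real.sin β : ℝ) : ℂ)) • σz) :
    (1 / 2 : ℂ) * Matrix.trace (A * B * A⁻¹ * B⁻¹) =
      ((r ^ 2 + (1 - r ^ 2) * Real.cos (2 * β) : ℝ) : ℂ) := by
  obtain ⟨hr0, hr1⟩ := hr
  have hsR : Real.sqrt (1 - r ^ 2) ^ 2 = 1 - r ^ 2 :=
    Real.sq_sqrt (by nlinarith)
  have hs : ((Real.sqrt (1 - r ^ 2) : ℝ) : ℂ) ^ 2 = 1 - (r : ℂ) ^ 2 := by
    rw [← Complex.ofReal_pow, hsR]; push_cast; ring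
  have h4 : ((Real.cos α : ℝ) : ℂ) ^ 2 + ((Real.sin α : ℝ) : ℂ) ^ 2 = 1 := by
    norm_cast; exact Real.cos_sq_add_sin_sq α
  have h2 : ((Real.cos β : ℝ) : ℂ) ^ 2 + ((Real.sin β : ℝ) : ℂ) ^ 2 = 1 := by
    norm_cast; exact Real.cos_sq_add_sin_sq β
  set CA : ℂ := ((Real.cos α : ℝ) : ℂ)
  set SA : ℂ := ((Real.sin α : ℝ) : ℂ)
  set S : ℂ := ((Real.sqrt (1 - r ^ 2) : ℝ) : ℂ)
  set C : ℂ := ((Real.cos β : ℝ) : ℂ)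
  set D : ℂ := ((Real.sin β : ℝ) : ℂ)
  set R : ℂ := (r : ℂ)
  have hA' : A = !![R * CA + Complex.I * (R * SA), Complex.I * S;
      Complex.I * S, R * CA - Complex.I * (R * SA)] := by
    rw [hA]
    ext i j
    fin_cases i <;> fin_cases j <;>
      simp [σx, σz, Matrix.one_apply, C, D, S, CA, SA, R] <;> push_cast <;> ring
  have hB' : B = !![C + Complex.I * D, 0; 0, C - Complex.I * D] := by
    rw [hB]
    ext i j
    fin_cases i <;> fin_cases j <;>
      simp [σz, Matrix.one_apply, C, D] <;> ring
  have hAinv : A⁻¹ = !![R * CA - Complex.I * (R * SA), -(Complex.I * S);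
      -(Complex.I * S), R * CA + Complex.I * (R * SA)] := by
    refine inv_eq_right_inv ?_
    rw [hA']
    ext i j
    fin_cases i <;> fin_cases j <;>
      simp [Matrix.mul_apply, Fin.sum_univ_two, Matrix.one_apply]
    · linear_combination (-R ^ 2 * SA ^ 2 - S ^ 2) * Complex.I_sq + R ^ 2 * h4 + hs
    · ring
    · ring
    · linear_combination (-R ^ 2 * SA ^ 2 - S ^ 2) * Complex.I_sq + R ^ 2 * h4 + hs
  have hBinv : B⁻¹ = !![C - Complex.I * D, 0; 0, C + Complex.I * D] := by
    refine inv_eq_right_inv ?_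
    rw [hB']
    ext i j
    fin_cases i <;> fin_cases j <;>
      simp [Matrix.mul_apply, Fin.sum_univ_two, Matrix.one_apply]
    · linear_combination (-D ^ 2) * Complex.I_sq + h2
    · linear_combination (-D ^ 2) * Complex.I_sq + h2
  have hRHS : ((r ^ 2 + (1 - r ^ 2) * Real.cos (2 * β) : ℝ) : ℂ)
      = R ^ 2 + (1 - R ^ 2) * (2 * C ^ 2 - 1) := by
    rw [Real.cos_two_mul, show C = Complex.cos (β : ℂ) by simp [C, Complex.ofReal_cos]]; push_cast; ring
  rw [hAinv, hBinv, hA', hB', hRHS]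
  simp only [Matrix.trace_fin_two, Matrix.mul_apply, Fin.sum_univ_two,
    Matrix.cons_val', Matrix.cons_val_zero, Matrix.cons_val_one, Matrix.head_cons,
    Matrix.head_fin_const, Matrix.empty_val', Matrix.cons_val_fin_one, Matrix.of_apply,
    Matrix.cons_val_zero, Matrix.cons_val_one]
  linear_combination
    (Complex.I ^ 2 * R ^ 2 * SA ^ 2 * D ^ 2 - Complex.I ^ 2 * S ^ 2 * D ^ 2
      - R ^ 2 * CA ^ 2 * D ^ 2 - R ^ 2 * SA ^ 2 * C ^ 2 - R ^ 2 * SA ^ 2 * D ^ 2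
      - S ^ 2 * C ^ 2 + S ^ 2 * D ^ 2) * Complex.I_sq
    + (R ^ 2 * (C ^ 2 + D ^ 2)) * h4 + (C ^ 2 - D ^ 2) * hs + (2 * R ^ 2 - 1) * h2
end
end

section
/- Let t ∈ (-1,1). For A and B as in equation A = ((t-cos 2β)/(1-cos 2β))^{1/2}(cos α + i σ_z sin α) + i σ_x ((1-t)/(1-cos 2β))^{1/2} and B = cos β + i σ_z sin β, with β ∈ [β₀, π-β₀] where β₀ = (1/2)cos⁻¹t, the commutator equals [A,B] = t + i √(1-t²) v̂(α,β)·σ⃗, where v̂(α,β) = (√(1-z²) sin(α+β), √(1-z²) cos(α+β), z) and z = -√((1-t)/(1+t)) cot β. -/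
open Matrix Real

noncomputable section

def σy : Matrix (Fin 2) (Fin 2) ℂ := !![0, -Complex.I; Complex.I, 0]
def dotPauli (v : Fin 3 → ℝ) : Matrix (Fin 2) (Fin 2) ℂ :=
  (v 0 : ℂ) • σx + (v 1 : ℂ) • σy + (v 2 : ℂ) • σz

set_option maxHeartbeats 1600000 in
/-- For `t ∈ (-1,1)`, `β ∈ [β₀, π-β₀]` with `β₀ = (1/2) arccos t`, the commutator of
the canonical matrices `A`, `B` is `t + i √(1-t²) v̂(α,β)·σ⃗` with
`v̂(α,β) = (√(1-z²) sin(α+β), √(1-z²) cos(α+β), z)`, `z = -√((1-t)/(1+t)) cot β`. -/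
theorem commutator_formula (t α β : ℝ) (ht : t ∈ Set.Ioo (-1 : ℝ) 1)
    (hβ : β ∈ Set.Icc ((1 / 2) * Real.arccos t) (π - (1 / 2) * Real.arccos t))
    (A B : Matrix (Fin 2) (Fin 2) ℂ)
    (hA : A = ((Real.sqrt ((t - Real.cos (2 * β)) / (1 - Real.cos (2 * β))) : ℝ) : ℂ) •
        (((Real.cos α : ℝ) : ℂ) • (1 : Matrix (Fin 2) (Fin 2) ℂ) +
          (Complex.I * ((Real.sin α : ℝ) : ℂ)) • σz) +
      (Complex.I * ((Real.sqrt ((1 - t) / (1 - Real.cos (2 * β))) : ℝ) : ℂ)) • σx)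
    (hB : B = ((Real.cos β : ℝ) : ℂ) • (1 : Matrix (Fin 2) (Fin 2) ℂ) +
      (Complex.I * ((Real.sin β : ℝ) : ℂ)) • σz)
    (z : ℝ) (hz : z = -Real.sqrt ((1 - t) / (1 + t)) * (Real.cos β / Real.sin β))
    (v : Fin 3 → ℝ)
    (hv : v = ![Real.sqrt (1 - z ^ 2) * Real.sin (α + β),
                Real.sqrt (1 - z ^ 2) * Real.cos (α + β), z]) :
    A * B * A⁻¹ * B⁻¹ =
      ((t : ℝ) : ℂ) • (1 : Matrix (Fin 2) (Fin 2) ℂ) +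
        (Complex.I * ((Real.sqrt (1 - t ^ 2) : ℝ) : ℂ)) • dotPauli v := by
  obtain ⟨ht1, ht2⟩ := ht
  obtain ⟨hβ1, hβ2⟩ := hβ
  have harc0 : 0 < Real.arccos t := Real.arccos_pos.2 ht2
  have harcπ : Real.arccos t ≤ π := Real.arccos_le_pi t
  have hβpos : 0 < β := lt_of_lt_of_le (by linarith) hβ1
  have hβlt : β < π := lt_of_le_of_lt hβ2 (by linarith)
  have hsb : 0 < Real.sin β := Real.sin_pos_of_pos_of_lt_pi hβpos hβlt
  have hpyβ : Real.sin β ^ 2 + Real.cos β ^ 2 = 1 := Real.sin_sq_add_cos_sq β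
  have hpyα : Real.sin α ^ 2 + Real.cos α ^ 2 = 1 := Real.sin_sq_add_cos_sq α
  have hcos2 : Real.cos (2 * β) = 1 - 2 * Real.sin β ^ 2 := by
    rw [Real.cos_two_mul]; nlinarith
  have hden : 1 - Real.cos (2 * β) = 2 * Real.sin β ^ 2 := by rw [hcos2]; ring
  have hdenpos : 0 < 1 - Real.cos (2 * β) := by rw [hden]; positivity
  have htc : Real.cos (2 * β) ≤ t := by
    rcases le_or_gt (2 * β) π with h | h
    · have := Real.cos_le_cos_of_nonneg_of_le_pi (Real.arccos_nonneg t) h (by linarith)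
      rwa [Real.cos_arccos ht1.le ht2.le] at this
    · have h1 : Real.cos (2 * β) = Real.cos (2 * π - 2 * β) := by
        rw [Real.cos_two_pi_sub]
      have h2 := Real.cos_le_cos_of_nonneg_of_le_pi (Real.arccos_nonneg t)
        (show 2 * π - 2 * β ≤ π by linarith) (by linarith)
      rw [Real.cos_arccos ht1.le ht2.le] at h2
      linarith [h1 ▸ h2]
  set c : ℝ := Real.sqrt ((t - Real.cos (2 * β)) / (1 - Real.cos (2 * β))) with hc
  set s : ℝ := Real.sqrt ((1 - t) / (1 - Real.cos (2 * β))) with hs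
  set w : ℝ := Real.sqrt (1 - t ^ 2) with hwdef
  set u : ℝ := Real.sqrt (1 - z ^ 2) with hudef
  have hcnn : 0 ≤ c := Real.sqrt_nonneg _
  have hsnn : 0 ≤ s := Real.sqrt_nonneg _
  have hwnn : 0 ≤ w := Real.sqrt_nonneg _
  have hunn : 0 ≤ u := Real.sqrt_nonneg _
  have hc2 : c ^ 2 = (t - Real.cos (2 * β)) / (2 * Real.sin β ^ 2) := by
    rw [hc, Real.sq_sqrt (div_nonneg (by linarith) hdenpos.le), hden]
  have hs2 : s ^ 2 = (1 - t) / (2 * Real.sin β ^ 2) := by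
    rw [hs, Real.sq_sqrt (div_nonneg (by linarith) hdenpos.le), hden]
  have hw2 : w ^ 2 = 1 - t ^ 2 := Real.sq_sqrt (by nlinarith)
  have hr2 : Real.sqrt ((1 - t) / (1 + t)) ^ 2 = (1 - t) / (1 + t) :=
    Real.sq_sqrt (div_nonneg (by linarith) (by linarith))
  have hz2 : z ^ 2 = (1 - t) / (1 + t) * (Real.cos β / Real.sin β) ^ 2 := by
    rw [hz]; rw [mul_pow, neg_pow]; rw [hr2]; ring
  have h1z : 1 - z ^ 2 = (t - Real.cos (2 * β)) / ((1 + t) * Real.sin β ^ 2) := by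
    have h1t : (0:ℝ) < 1 + t := by linarith
    have hsne : Real.sin β ≠ 0 := ne_of_gt hsb
    rw [hz2, hcos2, eq_div_iff (by positivity)]
    field_simp
    ring_nf
    linear_combination (t - 1) * hpyβ
  have hu2 : u ^ 2 = (t - Real.cos (2 * β)) / ((1 + t) * Real.sin β ^ 2) := by
    rw [hudef, Real.sq_sqrt (by
      rw [h1z]
      exact div_nonneg (by linarith) (mul_nonneg (by linarith) (sq_nonneg _))), h1z]
  have hwr : w * Real.sqrt ((1 - t) / (1 + t)) = 1 - t := by
    have h1t : (0:ℝ) < 1 + t := by linarith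
    rw [hwdef, ← Real.sqrt_mul (by nlinarith)]
    have : (1 - t ^ 2) * ((1 - t) / (1 + t)) = (1 - t) ^ 2 := by
      field_simp; ring
    rw [this, Real.sqrt_sq (by linarith)]
  -- the three key real identities
  have R1r : c ^ 2 + s ^ 2 * (1 - 2 * Real.sin β ^ 2) = t := by
    rw [hc2, hs2, hcos2]; field_simp; ring
  have R2r : -(s ^ 2 * (2 * Real.sin β * Real.cos β)) = w * z := by
    rw [hs2, hz, show w * (-Real.sqrt ((1 - t) / (1 + t)) * (Real.cos β / Real.sin β)) =
      -((w * Real.sqrt ((1 - t) / (1 + t))) * (Real.cos β / Real.sin β)) by ring, hwr]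
    field_simp
  have R3r : 2 * c * s * Real.sin β = w * u := by
    have hL : 0 ≤ 2 * c * s * Real.sin β := by positivity
    have hR : 0 ≤ w * u := by positivity
    have hsq : (2 * c * s * Real.sin β) ^ 2 = (w * u) ^ 2 := by
      have h1t : (0:ℝ) < 1 + t := by linarith
      have hsne : Real.sin β ≠ 0 := ne_of_gt hsb
      have e1 : (2 * c * s * Real.sin β) ^ 2 = 4 * c ^ 2 * s ^ 2 * Real.sin β ^ 2 := by ring
      have e2 : (w * u) ^ 2 = w ^ 2 * u ^ 2 := by ring
      rw [e1, e2, hc2, hs2, hw2, hu2]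
      field_simp
      ring
    calc 2 * c * s * Real.sin β = Real.sqrt ((2 * c * s * Real.sin β) ^ 2) :=
          (Real.sqrt_sq hL).symm
      _ = Real.sqrt ((w * u) ^ 2) := by rw [hsq]
      _ = w * u := Real.sqrt_sq hR
  -- cast to ℂ
  have R1 : (c : ℂ) ^ 2 + (s : ℂ) ^ 2 * (1 - 2 * (Real.sin β : ℂ) ^ 2) = (t : ℂ) := by
    exact_mod_cast congrArg (fun x : ℝ => (x : ℂ)) R1r
  have R2 : -((s : ℂ) ^ 2 * (2 * (Real.sin β : ℂ) * (Real.cos β : ℂ))) = (w : ℂ) * (z : ℂ) := by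
    exact_mod_cast congrArg (fun x : ℝ => (x : ℂ)) R2r
  have R3 : 2 * (c : ℂ) * (s : ℂ) * (Real.sin β : ℂ) = (w : ℂ) * (u : ℂ) := by
    exact_mod_cast congrArg (fun x : ℝ => (x : ℂ)) R3r
  have Pα : (Real.cos α : ℂ) ^ 2 + (Real.sin α : ℂ) ^ 2 = 1 := by
    exact_mod_cast congrArg (fun x : ℝ => (x : ℂ)) (Real.cos_sq_add_sin_sq α)
  have Pβ : (Real.cos β : ℂ) ^ 2 + (Real.sin β : ℂ) ^ 2 = 1 := by
    exact_mod_cast congrArg (fun x : ℝ => (x : ℂ)) (Real.cos_sq_add_sin_sq β)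
  have hsadd : (Real.sin (α + β) : ℂ) =
      (Real.sin α : ℂ) * (Real.cos β : ℂ) + (Real.cos α : ℂ) * (Real.sin β : ℂ) := by
    exact_mod_cast congrArg (fun x : ℝ => (x : ℂ)) (Real.sin_add α β)
  have hcadd : (Real.cos (α + β) : ℂ) =
      (Real.cos α : ℂ) * (Real.cos β : ℂ) - (Real.sin α : ℂ) * (Real.sin β : ℂ) := by
    exact_mod_cast congrArg (fun x : ℝ => (x : ℂ)) (Real.cos_add α β)
  -- explicit matrices
  have hsadd' : Complex.sin ((α : ℂ) + (β : ℂ)) =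
      (Real.sin α : ℂ) * (Real.cos β : ℂ) + (Real.cos α : ℂ) * (Real.sin β : ℂ) := by
    rw [← Complex.ofReal_add, ← Complex.ofReal_sin]; exact hsadd
  have hcadd' : Complex.cos ((α : ℂ) + (β : ℂ)) =
      (Real.cos α : ℂ) * (Real.cos β : ℂ) - (Real.sin α : ℂ) * (Real.sin β : ℂ) := by
    rw [← Complex.ofReal_add, ← Complex.ofReal_cos]; exact hcadd
  set ca : ℂ := (Real.cos α : ℂ)
  set sa : ℂ := (Real.sin α : ℂ)
  set cb : ℂ := (Real.cos β : ℂ)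
  set sb : ℂ := (Real.sin β : ℂ)
  have hI : Complex.I ^ 2 = -1 := Complex.I_sq
  have hI3 : Complex.I ^ 3 = -Complex.I := by rw [pow_succ, hI]; ring
  have hI4 : Complex.I ^ 4 = 1 := by rw [show (4:ℕ) = 2 + 2 from rfl, pow_add, hI]; ring
  have hA' : A = !![(c : ℂ) * (ca + Complex.I * sa), Complex.I * s;
                    Complex.I * s, (c : ℂ) * (ca - Complex.I * sa)] := by
    rw [hA]
    ext i j
    fin_cases i <;> fin_cases j <;>
      simp [σx, σz, Matrix.one_apply, ca, sa] <;> ring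
  have hB' : B = !![cb + Complex.I * sb, 0; 0, cb - Complex.I * sb] := by
    rw [hB]
    ext i j
    fin_cases i <;> fin_cases j <;>
      simp [σz, Matrix.one_apply, cb, sb] <;> ring
  have hcs1 : (c : ℂ) ^ 2 + (s : ℂ) ^ 2 = 1 := by
    have : c ^ 2 + s ^ 2 = 1 := by rw [hc2, hs2]; field_simp; linarith [hden]
    exact_mod_cast congrArg (fun x : ℝ => (x : ℂ)) this
  have hAinv : A⁻¹ = !![(c : ℂ) * (ca - Complex.I * sa), -(Complex.I * s);
                        -(Complex.I * s), (c : ℂ) * (ca + Complex.I * sa)] := by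
    apply Matrix.inv_eq_right_inv
    rw [hA', Matrix.mul_fin_two]
    ext i j
    fin_cases i <;> fin_cases j <;> simp [Matrix.one_apply]
    · linear_combination (c : ℂ) ^ 2 * Pα + hcs1 - ((c : ℂ) ^ 2 * sa ^ 2 + (s : ℂ) ^ 2) * hI
    · ring
    · ring
    · linear_combination (c : ℂ) ^ 2 * Pα + hcs1 - ((c : ℂ) ^ 2 * sa ^ 2 + (s : ℂ) ^ 2) * hI
  have hBinv : B⁻¹ = !![cb - Complex.I * sb, 0; 0, cb + Complex.I * sb] := by
    apply Matrix.inv_eq_right_inv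
    rw [hB', Matrix.mul_fin_two]
    ext i j
    fin_cases i <;> fin_cases j <;> simp [Matrix.one_apply]
    · linear_combination Pβ - sb ^ 2 * hI
    · linear_combination Pβ - sb ^ 2 * hI
  rw [hAinv, hBinv, hA', hB', Matrix.mul_fin_two, Matrix.mul_fin_two, Matrix.mul_fin_two]
  ext i j
  fin_cases i <;> fin_cases j <;>
    simp [hv, dotPauli, σx, σy, σz, Matrix.one_apply] <;>
    push_cast [-Complex.ofReal_sin, -Complex.ofReal_cos] <;>
    (try simp only [hsadd, hcadd, hsadd', hcadd']) <;>
    (try ring_nf) <;>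
    simp only [hI, hI3, hI4, hsadd', hcadd']
  · -- (0,0)
    linear_combination ((c : ℂ) ^ 2 * (cb ^ 2 + sb ^ 2)) * Pα + ((c : ℂ) ^ 2 + (s : ℂ) ^ 2) * Pβ
      + R1 + Complex.I * R2
  · -- (0,1)
    linear_combination (ca * cb - sa * sb + Complex.I * (sa * cb + ca * sb)) * R3
  · -- (1,0)
    linear_combination (-(ca * cb - sa * sb - Complex.I * (sa * cb + ca * sb))) * R3
  · -- (1,1)
    linear_combination (c : ℂ) ^ 2 * Pα + (s : ℂ) ^ 2 * Pβ + R1 - Complex.I * R2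
      + (c : ℂ) ^ 2 * (ca ^ 2 + sa ^ 2) * Pβ
end
end

section
/- Every quadruple (A,B,a,b) ∈ SU(2)⁴ with tr(a) = tr(b) = 0, [A,B]ab = 1, and AB = BA is simultaneously conjugate to one of the form A = cos α + i σ_z sin α, B = cos β + i σ_z sin β, a = i σ_x cos γ + i σ_z sin γ, b = a⁻¹, with α ∈ [0,2π], β ∈ [0,π], γ ∈ [-π/2, π/2]. -/
open Matrix

noncomputable section

def circ (t : ℝ) : Matrix (Fin 2) (Fin 2) ℂ :=
  (Real.cos t : ℂ) • (1 : Matrix (Fin 2) (Fin 2) ℂ) + (Complex.I * (Real.sin t : ℂ)) • σz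

namespace SU2Aux

open Complex

local notation "M2" => Matrix (Fin 2) (Fin 2) ℂ

lemma inv2 (a b c d : ℂ) (h : a*d - b*c = 1) : (!![a,b;c,d])⁻¹ = !![d,-b;-c,a] := by
  rw [Matrix.inv_def, Matrix.adjugate_fin_two, Matrix.det_fin_two_of, h]
  simp

lemma mem_su2 (p q : ℂ) (h : normSq p + normSq q = 1) :
    !![p, q; -(starRingEnd ℂ) q, (starRingEnd ℂ) p] ∈ Matrix.specialUnitaryGroup (Fin 2) ℂ := by
  rw [Matrix.mem_specialUnitaryGroup_iff]
  constructor
  · rw [Matrix.mem_unitaryGroup_iff]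
    ext i j
    fin_cases i <;> fin_cases j <;>
      simp [Matrix.mul_apply, Fin.sum_univ_two, star_def, mul_comm, Complex.ext_iff] <;>
      · have := congrArg Complex.re (by exact_mod_cast h : (normSq p + normSq q : ℂ) = 1)
        simp [Complex.normSq_apply, Complex.ext_iff] at *
        linarith
  · rw [Matrix.det_fin_two_of]
    have : p * (starRingEnd ℂ) p + q * (starRingEnd ℂ) q = 1 := by
      rw [Complex.mul_conj, Complex.mul_conj]; exact_mod_cast h
    linear_combination this

lemma su2_shape (M : M2) (hM : M ∈ Matrix.specialUnitaryGroup (Fin 2) ℂ) :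
    ∃ p q : ℂ, normSq p + normSq q = 1 ∧
      M = !![p, q; -(starRingEnd ℂ) q, (starRingEnd ℂ) p] := by
  rw [Matrix.mem_specialUnitaryGroup_iff, Matrix.mem_unitaryGroup_iff] at hM
  obtain ⟨hu, hd⟩ := hM
  have hstar : star M = M⁻¹ := (Matrix.inv_eq_right_inv hu).symm
  have hadj : M⁻¹ = M.adjugate := by rw [Matrix.inv_def, hd]; simp
  have h := hstar.trans hadj
  rw [Matrix.adjugate_fin_two] at h
  have h11 : M 1 1 = (starRingEnd ℂ) (M 0 0) := by
    have := congrFun (congrFun h 0) 0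
    simpa [Matrix.star_apply, star_def] using this.symm
  have h10 : M 1 0 = -(starRingEnd ℂ) (M 0 1) := by
    have := congrFun (congrFun h 1) 0
    simp [Matrix.star_apply, star_def] at this
    linear_combination this
  refine ⟨M 0 0, M 0 1, ?_, ?_⟩
  · have hd' : M.det = 1 := hd
    rw [Matrix.det_fin_two, h11, h10] at hd'
    have : M 0 0 * (starRingEnd ℂ) (M 0 0) + M 0 1 * (starRingEnd ℂ) (M 0 1) = 1 := by
      linear_combination hd'
    rw [Complex.mul_conj, Complex.mul_conj] at this
    exact_mod_cast this
  · nth_rewrite 1 [Matrix.eta_fin_two M]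
    rw [h11, h10]

lemma su2_det (M : M2) (hM : M ∈ Matrix.specialUnitaryGroup (Fin 2) ℂ) : M.det = 1 :=
  (Matrix.mem_specialUnitaryGroup_iff.mp hM).2

lemma su2_mul_inv (M : M2) (hM : M ∈ Matrix.specialUnitaryGroup (Fin 2) ℂ) : M * M⁻¹ = 1 :=
  Matrix.mul_nonsing_inv M (by rw [su2_det M hM]; norm_num)

lemma su2_inv_mul (M : M2) (hM : M ∈ Matrix.specialUnitaryGroup (Fin 2) ℂ) : M⁻¹ * M = 1 :=
  Matrix.nonsing_inv_mul M (by rw [su2_det M hM]; norm_num)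

lemma su2_inv_mem (M : M2) (hM : M ∈ Matrix.specialUnitaryGroup (Fin 2) ℂ) :
    M⁻¹ ∈ Matrix.specialUnitaryGroup (Fin 2) ℂ := by
  rw [Matrix.mem_specialUnitaryGroup_iff] at hM ⊢
  obtain ⟨hu, hd⟩ := hM
  have hstar : star M = M⁻¹ := (Matrix.inv_eq_right_inv ((Matrix.mem_unitaryGroup_iff).mp hu)).symm
  rw [← hstar]
  constructor
  · exact Unitary.star_mem hu
  · show (Mᴴ).det = 1
    rw [Matrix.det_conjTranspose, hd]
    simp

lemma su2_conj_mem (g M : M2) (hg : g ∈ Matrix.specialUnitaryGroup (Fin 2) ℂ)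
    (hM : M ∈ Matrix.specialUnitaryGroup (Fin 2) ℂ) :
    g * M * g⁻¹ ∈ Matrix.specialUnitaryGroup (Fin 2) ℂ :=
  mul_mem (mul_mem hg hM) (su2_inv_mem g hg)

lemma conj_trace (g M : M2) (hg : g ∈ Matrix.specialUnitaryGroup (Fin 2) ℂ) :
    Matrix.trace (g * M * g⁻¹) = Matrix.trace M := by
  rw [Matrix.trace_mul_comm, ← Matrix.mul_assoc, su2_inv_mul g hg, Matrix.one_mul]

lemma conj_mul (g X Y : M2) (hg : g ∈ Matrix.specialUnitaryGroup (Fin 2) ℂ) :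
    (g * X * g⁻¹) * (g * Y * g⁻¹) = g * (X * Y) * g⁻¹ := by
  have := su2_inv_mul g hg
  calc (g * X * g⁻¹) * (g * Y * g⁻¹) = g * X * (g⁻¹ * g) * Y * g⁻¹ := by
        simp only [Matrix.mul_assoc]
    _ = g * (X * Y) * g⁻¹ := by rw [this]; simp only [Matrix.mul_assoc, Matrix.mul_one,
        Matrix.one_mul]

lemma conj_comp (g h X : M2) (hg : g ∈ Matrix.specialUnitaryGroup (Fin 2) ℂ) :
    (h * g) * X * (h * g)⁻¹ = h * (g * X * g⁻¹) * h⁻¹ := by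
  rw [Matrix.mul_inv_rev]
  simp only [Matrix.mul_assoc]

/-- Diagonalization of an SU(2) matrix. -/
lemma su2_diag (p q : ℂ) (h : normSq p + normSq q = 1) :
    ∃ g : M2, g ∈ Matrix.specialUnitaryGroup (Fin 2) ℂ ∧ ∃ l : ℂ,
      normSq l = 1 ∧
      g * !![p, q; -(starRingEnd ℂ) q, (starRingEnd ℂ) p] * g⁻¹ = !![l, 0; 0, (starRingEnd ℂ) l] := by
  by_cases hq : q = 0
  · refine ⟨1, one_mem _, p, ?_, ?_⟩
    · simp [hq] at h; exact h
    · have h1 : (1 : M2)⁻¹ = 1 := by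
        rw [Matrix.inv_def]; simp
      rw [h1, Matrix.one_mul, Matrix.mul_one, hq]
      simp
  · have hple : p.re ^ 2 ≤ 1 := by
      have h1 : normSq q > 0 := normSq_pos.mpr hq
      have h2 := Complex.normSq_apply p
      nlinarith [sq_nonneg p.im]
    set s : ℝ := Real.sqrt (1 - p.re ^ 2) with hs_def
    have hs2 : s ^ 2 = 1 - p.re ^ 2 := Real.sq_sqrt (by linarith)
    set l : ℂ := ⟨p.re, s⟩ with hl_def
    have hl : normSq l = 1 := by
      simp [Complex.normSq_mk, hl_def]
      nlinarith
    have hsum : l + (starRingEnd ℂ) l = p + (starRingEnd ℂ) p := by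
      apply Complex.ext <;> simp [hl_def]
    have hll : l * (starRingEnd ℂ) l = 1 := by
      rw [Complex.mul_conj]; exact_mod_cast hl
    have hqq : q * (starRingEnd ℂ) q = 1 - p * (starRingEnd ℂ) p := by
      rw [Complex.mul_conj, Complex.mul_conj]
      have : (normSq q : ℂ) = 1 - normSq p := by
        have : (normSq p : ℂ) + normSq q = 1 := by exact_mod_cast h
        linear_combination this
      exact_mod_cast this
    set N : ℝ := Real.sqrt (normSq q + normSq (l - p)) with hN_def
    have hNpos : 0 < N := by
      apply Real.sqrt_pos.mpr
      have := normSq_pos.mpr hq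
      nlinarith [normSq_nonneg (l - p)]
    have hN2 : N ^ 2 = normSq q + normSq (l - p) :=
      Real.sq_sqrt (by nlinarith [normSq_nonneg q, normSq_nonneg (l - p)])
    have hNne : (N : ℂ) ≠ 0 := by exact_mod_cast hNpos.ne'
    set p' : ℂ := (starRingEnd ℂ) q / N with hp'_def
    set q' : ℂ := (starRingEnd ℂ) (l - p) / N with hq'_def
    have hmem : normSq p' + normSq q' = 1 := by
      rw [hp'_def, hq'_def, normSq_div, normSq_div, normSq_conj, normSq_conj]
      rw [Complex.normSq_ofReal]
      field_simp
      nlinarith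
    refine ⟨!![p', q'; -(starRingEnd ℂ) q', (starRingEnd ℂ) p'], mem_su2 p' q' hmem, l, hl, ?_⟩
    have hcq' : (starRingEnd ℂ) q' = (l - p) / N := by
      rw [hq'_def]; rw [map_div₀]; simp
    have hcp' : (starRingEnd ℂ) p' = q / N := by
      rw [hp'_def]; rw [map_div₀]; simp
    set g : M2 := !![p', q'; -(starRingEnd ℂ) q', (starRingEnd ℂ) p'] with hg_def
    have hginv : g * g⁻¹ = 1 := su2_mul_inv g (mem_su2 p' q' hmem)
    have key : g * !![p, q; -(starRingEnd ℂ) q, (starRingEnd ℂ) p]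
        = !![l, 0; 0, (starRingEnd ℂ) l] * g := by
      rw [hg_def]
      ext i j
      fin_cases i <;> fin_cases j <;>
        simp [Matrix.mul_apply, Fin.sum_univ_two, hcq', hcp', hp'_def, hq'_def] <;>
        field_simp
      · linear_combination (-(starRingEnd ℂ) q) * hsum
      · linear_combination hqq - hll + (starRingEnd ℂ) p * hsum
      · linear_combination (-hqq + hll - p * hsum)
      · linear_combination (-1 : ℂ) * hsum
    calc g * !![p, q; -(starRingEnd ℂ) q, (starRingEnd ℂ) p] * g⁻¹
        = !![l, 0; 0, (starRingEnd ℂ) l] * g * g⁻¹ := by rw [key]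
      _ = !![l, 0; 0, (starRingEnd ℂ) l] := by rw [Matrix.mul_assoc, hginv, Matrix.mul_one]

end SU2Aux

namespace SU2Aux
open Complex
local notation "M2" => Matrix (Fin 2) (Fin 2) ℂ
local notation "SUs" => Matrix.specialUnitaryGroup (Fin 2) ℂ

lemma smul_one_eq (l : ℂ) : l • (1 : M2) = !![l, 0; 0, l] := by
  rw [Matrix.one_fin_two]
  ext i j
  fin_cases i <;> fin_cases j <;> simp

lemma diag_pair (A B : M2) (hA : A ∈ SUs) (hB : B ∈ SUs) (hcomm : A * B = B * A) :
    ∃ g ∈ SUs, ∃ l m : ℂ, normSq l = 1 ∧ normSq m = 1 ∧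
      g * A * g⁻¹ = !![l, 0; 0, (starRingEnd ℂ) l] ∧
      g * B * g⁻¹ = !![m, 0; 0, (starRingEnd ℂ) m] := by
  obtain ⟨pa, qa, hpa, hAeq⟩ := su2_shape A hA
  obtain ⟨g1, hg1, l, hl, hdiag⟩ := su2_diag pa qa hpa
  rw [← hAeq] at hdiag
  by_cases hreal : l = (starRingEnd ℂ) l
  · -- A is scalar ±1
    have hA_scalar : A = l • 1 := by
      have h1 : g1⁻¹ * (g1 * A * g1⁻¹) * g1 = A := by
        calc g1⁻¹ * (g1 * A * g1⁻¹) * g1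
            = (g1⁻¹ * g1) * A * (g1⁻¹ * g1) := by simp only [Matrix.mul_assoc]
          _ = A := by rw [su2_inv_mul g1 hg1]; simp
      rw [← h1, hdiag, ← hreal, ← smul_one_eq]
      rw [Matrix.mul_smul, Matrix.smul_mul, Matrix.mul_one, su2_inv_mul g1 hg1]
    obtain ⟨pb, qb, hpb, hBeq⟩ := su2_shape B hB
    obtain ⟨g2, hg2, m, hm, hdiag2⟩ := su2_diag pb qb hpb
    rw [← hBeq] at hdiag2
    refine ⟨g2, hg2, l, m, hl, hm, ?_, hdiag2⟩
    rw [hA_scalar, Matrix.mul_smul, Matrix.smul_mul, Matrix.mul_one, su2_mul_inv g2 hg2,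
      smul_one_eq, ← hreal]
  · -- l ≠ conj l, eigenvalues distinct
    set B1 := g1 * B * g1⁻¹ with hB1_def
    have hB1mem : B1 ∈ SUs := su2_conj_mem g1 B hg1 hB
    have hcomm1 : (g1 * A * g1⁻¹) * B1 = B1 * (g1 * A * g1⁻¹) := by
      rw [hB1_def, conj_mul _ _ _ hg1, conj_mul _ _ _ hg1, hcomm]
    rw [hdiag] at hcomm1
    obtain ⟨pm, qm, hpm, hB1eq⟩ := su2_shape B1 hB1mem
    have h01 : l * qm = qm * (starRingEnd ℂ) l := by
      have h := congrFun (congrFun hcomm1 0) 1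
      rw [hB1eq] at h
      simpa [Matrix.mul_apply, Fin.sum_univ_two] using h
    have hqm : qm = 0 := by
      have h2 : qm * (l - (starRingEnd ℂ) l) = 0 := by linear_combination h01
      rcases mul_eq_zero.mp h2 with h | h
      · exact h
      · exact absurd (sub_eq_zero.mp h) hreal
    refine ⟨g1, hg1, l, pm, hl, ?_, hdiag, ?_⟩
    · rw [hqm] at hpm; simpa using hpm
    · rw [← hB1_def, hB1eq, hqm]; simp

lemma swap_diag (x y : ℂ) :
    !![(0:ℂ),1;-1,0] * !![x, 0; 0, y] * (!![(0:ℂ),1;-1,0])⁻¹ = !![y, 0; 0, x] := by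
  rw [inv2 0 1 (-1) 0 (by ring)]
  ext i j
  fin_cases i <;> fin_cases j <;> simp [Matrix.mul_apply, Fin.sum_univ_two]

lemma S_mem : !![(0:ℂ),1;-1,0] ∈ SUs := by
  have := mem_su2 0 1 (by simp)
  simpa using this

lemma diag_pair' (A B : M2) (hA : A ∈ SUs) (hB : B ∈ SUs) (hcomm : A * B = B * A) :
    ∃ g ∈ SUs, ∃ l m : ℂ, normSq l = 1 ∧ normSq m = 1 ∧ 0 ≤ m.im ∧
      g * A * g⁻¹ = !![l, 0; 0, (starRingEnd ℂ) l] ∧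
      g * B * g⁻¹ = !![m, 0; 0, (starRingEnd ℂ) m] := by
  obtain ⟨g, hg, l, m, hl, hm, hAd, hBd⟩ := diag_pair A B hA hB hcomm
  rcases le_or_gt 0 m.im with him | him
  · exact ⟨g, hg, l, m, hl, hm, him, hAd, hBd⟩
  · refine ⟨!![(0:ℂ),1;-1,0] * g, mul_mem S_mem hg, (starRingEnd ℂ) l, (starRingEnd ℂ) m,
      ?_, ?_, ?_, ?_, ?_⟩
    · simpa using hl
    · simpa using hm
    · simp; linarith
    · rw [conj_comp _ _ _ hg, hAd, swap_diag]
      simp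
    · rw [conj_comp _ _ _ hg, hBd, swap_diag]
      simp

lemma circ_eq (t : ℝ) :
    circ t = !![(Real.cos t : ℂ) + Real.sin t * I, 0; 0, (Real.cos t : ℂ) - Real.sin t * I] := by
  unfold circ σz
  rw [Matrix.one_fin_two]
  ext i j
  fin_cases i <;> fin_cases j <;> simp <;> ring

lemma conj_unit (c s : ℝ) : (starRingEnd ℂ) ((c:ℂ) + s * I) = (c:ℂ) - s * I := by
  simp [Complex.ext_iff]

lemma exists_alpha (l : ℂ) (hl : normSq l = 1) :
    ∃ α ∈ Set.Icc (0:ℝ) (2*Real.pi), circ α = !![l, 0; 0, (starRingEnd ℂ) l] := by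
  have habs : ‖l‖ = 1 := by
    rw [Complex.norm_def, hl, Real.sqrt_one]
  have hmain : (Real.cos l.arg : ℂ) + Real.sin l.arg * I = l := by
    have := Complex.norm_mul_cos_add_sin_mul_I l
    rw [habs] at this
    simpa using this
  rcases le_or_gt 0 l.arg with hpos | hneg
  · refine ⟨l.arg, ⟨hpos, ?_⟩, ?_⟩
    · have := Complex.arg_le_pi l
      have := Real.pi_pos
      linarith
    · rw [circ_eq, ← conj_unit, hmain]
  · refine ⟨l.arg + 2*Real.pi, ⟨?_, ?_⟩, ?_⟩
    · have := Complex.neg_pi_lt_arg l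
      have := Real.pi_pos
      linarith
    · linarith [Complex.arg_le_pi l, Real.pi_pos]
    · rw [circ_eq, Real.cos_add_two_pi, Real.sin_add_two_pi, ← conj_unit, hmain]

lemma exists_beta (m : ℂ) (hm : normSq m = 1) (him : 0 ≤ m.im) :
    ∃ β ∈ Set.Icc (0:ℝ) Real.pi, circ β = !![m, 0; 0, (starRingEnd ℂ) m] := by
  have habs : ‖m‖ = 1 := by
    rw [Complex.norm_def, hm, Real.sqrt_one]
  have hmain : (Real.cos m.arg : ℂ) + Real.sin m.arg * I = m := by
    have := Complex.norm_mul_cos_add_sin_mul_I m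
    rw [habs] at this
    simpa using this
  refine ⟨m.arg, ⟨Complex.arg_nonneg_iff.mpr him, Complex.arg_le_pi m⟩, ?_⟩
  rw [circ_eq, ← conj_unit, hmain]

end SU2Aux

namespace SU2Aux
open Complex
local notation "M2" => Matrix (Fin 2) (Fin 2) ℂ
local notation "SUs" => Matrix.specialUnitaryGroup (Fin 2) ℂ

lemma fix_diag (w x y : ℂ) (hww : w * (starRingEnd ℂ) w = 1) :
    !![w, 0; 0, (starRingEnd ℂ) w] * !![x, 0; 0, y] * (!![w, 0; 0, (starRingEnd ℂ) w])⁻¹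
      = !![x, 0; 0, y] := by
  rw [inv2 w 0 0 ((starRingEnd ℂ) w) (by linear_combination hww)]
  ext i j
  fin_cases i <;> fin_cases j <;> simp [Matrix.mul_apply, Fin.sum_univ_two]
  · linear_combination x * hww
  · linear_combination y * hww

lemma conj_offdiag (w p q : ℂ) (hww : w * (starRingEnd ℂ) w = 1) :
    !![w, 0; 0, (starRingEnd ℂ) w] * !![p, q; -(starRingEnd ℂ) q, (starRingEnd ℂ) p] *
      (!![w, 0; 0, (starRingEnd ℂ) w])⁻¹
      = !![p, w^2 * q; -(starRingEnd ℂ) (w^2 * q), (starRingEnd ℂ) p] := by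
  rw [inv2 w 0 0 ((starRingEnd ℂ) w) (by linear_combination hww)]
  ext i j
  fin_cases i <;> fin_cases j <;>
    simp [Matrix.mul_apply, Fin.sum_univ_two, _root_.map_mul, map_pow]
  · linear_combination p * hww
  · ring
  · ring
  · linear_combination (starRingEnd ℂ) p * hww

lemma target_eq (γ : ℝ) :
    (Complex.I * (Real.cos γ : ℂ)) • σx + (Complex.I * (Real.sin γ : ℂ)) • σz
      = !![I * Real.sin γ, I * Real.cos γ; I * Real.cos γ, -(I * Real.sin γ)] := by
  unfold σx σz
  ext i j
  fin_cases i <;> fin_cases j <;> simp <;> ring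

end SU2Aux

section MainThm
open SU2Aux Complex
local notation "M2" => Matrix (Fin 2) (Fin 2) ℂ
local notation "SUs" => Matrix.specialUnitaryGroup (Fin 2) ℂ

/-- Every quadruple `(A,B,a,b) ∈ SU(2)⁴` with `tr a = tr b = 0`, `[A,B]ab = 1` and
`AB = BA` is simultaneously conjugate to a canonical quadruple. -/
theorem abelian_quadruple_canonical_form (A B a b : SU2)
    (ha : Matrix.trace (a : Matrix (Fin 2) (Fin 2) ℂ) = 0)
    (hb : Matrix.trace (b : Matrix (Fin 2) (Fin 2) ℂ) = 0)
    (hrel : (A : Matrix (Fin 2) (Fin 2) ℂ) * B * (A : Matrix (Fin 2) (Fin 2) ℂ)⁻¹ *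
      (B : Matrix (Fin 2) (Fin 2) ℂ)⁻¹ * a * b = 1)
    (hcomm : (A : Matrix (Fin 2) (Fin 2) ℂ) * B = (B : Matrix (Fin 2) (Fin 2) ℂ) * A) :
    ∃ (g : SU2) (α β γ : ℝ),
      α ∈ Set.Icc (0 : ℝ) (2 * Real.pi) ∧
      β ∈ Set.Icc (0 : ℝ) Real.pi ∧
      γ ∈ Set.Icc (-(Real.pi / 2)) (Real.pi / 2) ∧
      (g : Matrix (Fin 2) (Fin 2) ℂ) * A * (g : Matrix (Fin 2) (Fin 2) ℂ)⁻¹ = circ α ∧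
      (g : Matrix (Fin 2) (Fin 2) ℂ) * B * (g : Matrix (Fin 2) (Fin 2) ℂ)⁻¹ = circ β ∧
      (g : Matrix (Fin 2) (Fin 2) ℂ) * a * (g : Matrix (Fin 2) (Fin 2) ℂ)⁻¹ =
        (Complex.I * (Real.cos γ : ℂ)) • σx + (Complex.I * (Real.sin γ : ℂ)) • σz ∧
      (g : Matrix (Fin 2) (Fin 2) ℂ) * b * (g : Matrix (Fin 2) (Fin 2) ℂ)⁻¹ =
        ((Complex.I * (Real.cos γ : ℂ)) • σx + (Complex.I * (Real.sin γ : ℂ)) • σz)⁻¹ := by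
  classical
  -- a * b = 1
  have hcom1 : (A : M2) * B * (A : M2)⁻¹ * (B : M2)⁻¹ = 1 := by
    rw [hcomm, Matrix.mul_assoc (B : M2), su2_mul_inv _ A.2, Matrix.mul_one, su2_mul_inv _ B.2]
  rw [hcom1, Matrix.one_mul] at hrel
  -- diagonalize A and B simultaneously
  obtain ⟨g1, hg1, l, m, hl, hm, him, hAd, hBd⟩ := diag_pair' (A : M2) (B : M2) A.2 B.2 hcomm
  -- conjugate a
  set a1 : M2 := g1 * (a : M2) * g1⁻¹ with ha1_def
  have ha1mem : a1 ∈ SUs := su2_conj_mem g1 _ hg1 a.2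
  obtain ⟨pa, qa, hpa, ha1eq⟩ := su2_shape a1 ha1mem
  have htr : pa + (starRingEnd ℂ) pa = 0 := by
    have := conj_trace g1 (a : M2) hg1
    rw [← ha1_def, ha1eq, ha] at this
    simpa [Matrix.trace_fin_two_of] using this
  have hre : pa.re = 0 := by
    have := congrArg Complex.re htr
    simp at this
    linarith
  set z : ℝ := pa.im with hz_def
  have hpa_eq : pa = (z : ℂ) * I := by
    apply Complex.ext <;> simp [hre, hz_def]
  -- the unit u rotating qa to I * |qa|
  have hqa_abs : ((‖qa‖ : ℝ) : ℂ) * ((‖qa‖ : ℝ) : ℂ) = qa * (starRingEnd ℂ) qa := by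
    rw [Complex.mul_conj]
    norm_cast
    rw [← Complex.sq_norm]
    ring
  obtain ⟨u, hu1, hu2⟩ : ∃ u : ℂ, normSq u = 1 ∧ u * qa = (‖qa‖ : ℂ) * I := by
    by_cases hqa : qa = 0
    · exact ⟨1, by simp, by simp [hqa]⟩
    · refine ⟨I * (starRingEnd ℂ) qa / (‖qa‖ : ℂ), ?_, ?_⟩
      · rw [normSq_div, normSq_mul]
        simp [Complex.normSq_conj, Complex.normSq_eq_norm_sq]
        exact hqa
      · have habsne : ((‖qa‖ : ℝ) : ℂ) ≠ 0 := by
          exact_mod_cast (norm_ne_zero_iff.mpr hqa)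
        field_simp
        linear_combination (-1 : ℂ) * hqa_abs
  -- square root w of u
  set w : ℂ := Complex.exp ((u.arg / 2 : ℝ) * I) with hw_def
  have habsu : ‖u‖ = 1 := by rw [Complex.norm_def, hu1, Real.sqrt_one]
  have hw2 : w ^ 2 = u := by
    rw [hw_def, sq, ← Complex.exp_add]
    have harg : ((u.arg / 2 : ℝ) : ℂ) * I + ((u.arg / 2 : ℝ) : ℂ) * I = u.arg * I := by
      push_cast; ring
    rw [harg]
    have := Complex.norm_mul_exp_arg_mul_I u
    rwa [habsu, Complex.ofReal_one, one_mul] at this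
  have hww : w * (starRingEnd ℂ) w = 1 := by
    rw [Complex.mul_conj]
    have : ‖w‖ = 1 := by
      rw [hw_def, Complex.norm_exp]
      simp
    rw [Complex.normSq_eq_norm_sq, this]
    norm_num
  -- the diagonal conjugator h
  set hmat : M2 := !![w, 0; 0, (starRingEnd ℂ) w] with hh_def
  have hnw : normSq w = 1 := by
    rw [Complex.mul_conj] at hww
    exact_mod_cast hww
  have hhmem : hmat ∈ SUs := by
    have := mem_su2 w 0 (by simpa using hnw)
    simpa [hh_def] using this
  -- gamma
  have hz2 : z ^ 2 + normSq qa = 1 := by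
    have : normSq pa = z ^ 2 := by
      rw [Complex.normSq_apply, hre]; ring
    rw [← this]; exact hpa
  have hz_le : z ^ 2 ≤ 1 := by nlinarith [normSq_nonneg qa]
  have hz1 : -1 ≤ z := by nlinarith
  have hz1' : z ≤ 1 := by nlinarith
  set γ : ℝ := Real.arcsin z with hγ_def
  have hsin : Real.sin γ = z := Real.sin_arcsin hz1 hz1'
  have hcos : Real.cos γ = ‖qa‖ := by
    rw [hγ_def, Real.cos_arcsin, Complex.norm_def]
    congr 1
    nlinarith
  -- final group element
  set Gmat : M2 := hmat * g1 with hG_def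
  have hGmem : Gmat ∈ SUs := mul_mem hhmem hg1
  obtain ⟨α, hα, hcircα⟩ := exists_alpha l hl
  obtain ⟨β, hβ, hcircβ⟩ := exists_beta m hm him
  have hγmem : γ ∈ Set.Icc (-(Real.pi / 2)) (Real.pi / 2) := by
    constructor
    · have := Real.neg_pi_div_two_le_arcsin z; linarith
    · exact Real.arcsin_le_pi_div_two z
  have hGA : Gmat * (A : M2) * Gmat⁻¹ = circ α := by
    rw [hG_def, conj_comp _ _ _ hg1, hAd, hh_def, fix_diag _ _ _ hww, hcircα]
  have hGB : Gmat * (B : M2) * Gmat⁻¹ = circ β := by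
    rw [hG_def, conj_comp _ _ _ hg1, hBd, hh_def, fix_diag _ _ _ hww, hcircβ]
  have hGa : Gmat * (a : M2) * Gmat⁻¹ =
      (Complex.I * (Real.cos γ : ℂ)) • σx + (Complex.I * (Real.sin γ : ℂ)) • σz := by
    rw [hG_def, conj_comp _ _ _ hg1, ← ha1_def, ha1eq, hh_def, conj_offdiag _ _ _ hww, hw2,
      target_eq, hu2, hpa_eq, hsin, hcos]
    ext i j
    fin_cases i <;> fin_cases j <;> simp [Complex.ext_iff] <;> ring
  refine ⟨⟨Gmat, hGmem⟩, α, β, γ, hα, hβ, hγmem, hGA, hGB, hGa, ?_⟩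
  have hprod : (Gmat * (a : M2) * Gmat⁻¹) * (Gmat * (b : M2) * Gmat⁻¹) = 1 := by
    rw [conj_mul _ _ _ hGmem, hrel, Matrix.mul_one, su2_mul_inv _ hGmem]
  rw [hGa] at hprod
  exact (Matrix.inv_eq_right_inv hprod).symm

end MainThm
end
end

section
/- The space of conjugacy classes of pairs (A, a) ∈ SU(2)² with tr(a) = 0 (no relation between A and a) is homeomorphic to the closed unit disk D²; a homeomorphism sends (x,y) ∈ D² to the class of a = iσ_z, A = x + i(1-x²-y²)^{1/2} σ_x + i y σ_z. Under this homeomorphism, abelian pairs (Aa = aA) correspond to the boundary circle x² + y² = 1 and nonabelian pairs to the open disk. -/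
open Matrix

noncomputable section

/-- Pairs `(A, a) ∈ SU(2)²` with `tr a = 0`. -/
def PairSp : Type :=
  {q : SU2 × SU2 // Matrix.trace (q.2 : Matrix (Fin 2) (Fin 2) ℂ) = 0}

/-- Simultaneous conjugation relation on such pairs. -/
def conjRel2 (q q' : PairSp) : Prop :=
  ∃ g : SU2,
    (g : Matrix (Fin 2) (Fin 2) ℂ) * q.1.1 * (g : Matrix (Fin 2) (Fin 2) ℂ)⁻¹ =
      (q'.1.1 : Matrix (Fin 2) (Fin 2) ℂ) ∧
    (g : Matrix (Fin 2) (Fin 2) ℂ) * q.1.2 * (g : Matrix (Fin 2) (Fin 2) ℂ)⁻¹ =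
      (q'.1.2 : Matrix (Fin 2) (Fin 2) ℂ)

instance : TopologicalSpace PairSp := instTopologicalSpaceSubtype

/-- The canonical matrix `A = x + i √(1-x²-y²) σx + i y σz`. -/
def canonDiskA (x y : ℝ) : Matrix (Fin 2) (Fin 2) ℂ :=
  ((x : ℝ) : ℂ) • (1 : Matrix (Fin 2) (Fin 2) ℂ) +
    (Complex.I * ((Real.sqrt (1 - x ^ 2 - y ^ 2) : ℝ) : ℂ)) • σx +
    (Complex.I * ((y : ℝ) : ℂ)) • σz

namespace DiskCV
open Complex

local notation "M2" => Matrix (Fin 2) (Fin 2) ℂ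
local notation "CC" => starRingEnd ℂ

/-- standard SU(2) matrix -/
def mk2 (α β : ℂ) : M2 := !![α, β; -(CC β), CC α]

lemma star_mk2 (α β : ℂ) : star (mk2 α β) = mk2 (CC α) (-β) := by
  ext i j
  fin_cases i <;> fin_cases j <;>
    simp [mk2, Matrix.star_apply, Complex.star_def]

lemma mk2_mem {α β : ℂ} (h : normSq α + normSq β = 1) : mk2 α β ∈ SU2 := by
  have h' := h
  simp [Complex.normSq_apply] at h'
  rw [Matrix.mem_specialUnitaryGroup_iff]
  constructor
  · rw [Matrix.mem_unitaryGroup_iff, star_mk2]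
    ext i j
    fin_cases i <;> fin_cases j <;>
      simp [mk2, Matrix.mul_apply, Fin.sum_univ_two, Matrix.one_apply] <;>
      (apply Complex.ext <;> simp <;> nlinarith [h'])
  · show Matrix.det _ = 1
    rw [Matrix.det_fin_two]
    simp only [mk2, Matrix.cons_val', Matrix.cons_val_zero, Matrix.cons_val_one, Matrix.head_cons,
      Matrix.head_fin_const, Matrix.cons_val_fin_one, Matrix.empty_val']
    apply Complex.ext <;> simp <;> nlinarith [h']

lemma su2_form {A : M2} (h : A ∈ SU2) :
    ∃ α β : ℂ, normSq α + normSq β = 1 ∧ A = mk2 α β := by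
  obtain ⟨hu, hdet⟩ := Matrix.mem_specialUnitaryGroup_iff.mp h
  rw [Matrix.mem_unitaryGroup_iff] at hu
  have hdet' : Matrix.det A = 1 := hdet
  have hinv : A⁻¹ = star A := Matrix.inv_eq_right_inv hu
  have hadj : A⁻¹ = !![A 1 1, -(A 0 1); -(A 1 0), A 0 0] := by
    rw [Matrix.inv_def, Matrix.adjugate_fin_two, hdet']
    simp
  have h11 : CC (A 0 0) = A 1 1 := by
    have := congrFun (congrFun (hinv.symm.trans hadj) 0) 0
    simpa [Matrix.star_apply] using this
  have h10 : CC (A 0 1) = -(A 1 0) := by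
    have := congrFun (congrFun (hinv.symm.trans hadj) 1) 0
    simpa [Matrix.star_apply] using this
  refine ⟨A 0 0, A 0 1, ?_, ?_⟩
  · have key : A 0 0 * CC (A 0 0) + A 0 1 * CC (A 0 1) = 1 := by
      rw [h11, h10]
      rw [Matrix.det_fin_two] at hdet'
      linear_combination hdet'
    rw [Complex.mul_conj, Complex.mul_conj] at key
    exact_mod_cast key
  · ext i j
    fin_cases i <;> fin_cases j <;> simp [mk2]
    · rw [h10]; ring
    · exact h11.symm

lemma iσz_eq : Complex.I • σz = mk2 Complex.I 0 := by
  ext i j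
  fin_cases i <;> fin_cases j <;> simp [σz, mk2]

lemma iσz_mem : Complex.I • σz ∈ SU2 := by
  rw [iσz_eq]; exact mk2_mem (by simp)

lemma trace_iσz : Matrix.trace (Complex.I • σz) = 0 := by
  rw [iσz_eq]; simp [Matrix.trace_fin_two, mk2]

/-- structure of traceless SU(2) elements -/
lemma traceless_form {a : M2} (h : a ∈ SU2) (ht : Matrix.trace a = 0) :
    ∃ (u : ℝ) (v : ℂ), u ^ 2 + normSq v = 1 ∧ a = mk2 (u * Complex.I) v := by
  obtain ⟨α, β, hn, rfl⟩ := su2_form h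
  have htr : α + CC α = 0 := by
    simpa [Matrix.trace_fin_two, mk2] using ht
  have hre : α.re = 0 := by
    have := congrArg Complex.re htr
    simp at this
    linarith
  refine ⟨α.im, β, ?_, ?_⟩
  · rw [← hn]
    simp [Complex.normSq_apply, hre]
    ring
  · have : (α.im : ℂ) * Complex.I = α := by
      apply Complex.ext <;> simp [hre]
    rw [this]

lemma mul_mk2 (α β γ δ : ℂ) :
    mk2 α β * mk2 γ δ = mk2 (α * γ - β * CC δ) (α * δ + β * CC γ) := by
  ext i j
  fin_cases i <;> fin_cases j <;>
    simp [mk2, Matrix.mul_apply, Fin.sum_univ_two] <;>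
    (apply Complex.ext <;> simp <;> ring)

lemma trace_mk2 (α β : ℂ) : Matrix.trace (mk2 α β) = 2 * α.re := by
  simp [Matrix.trace_fin_two, mk2]
  apply Complex.ext <;> simp <;> ring

lemma su2_isUnit_det (g : SU2) : IsUnit ((g : M2).det) := by
  have : (g : M2).det = 1 := (Matrix.mem_specialUnitaryGroup_iff.mp g.2).2
  rw [this]; exact isUnit_one

lemma su2_inv_mul (g : SU2) : (g : M2)⁻¹ * (g : M2) = 1 :=
  Matrix.nonsing_inv_mul _ (su2_isUnit_det g)

lemma su2_mul_inv (g : SU2) : (g : M2) * (g : M2)⁻¹ = 1 :=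
  Matrix.mul_nonsing_inv _ (su2_isUnit_det g)

/-- the two invariants of a pair -/
def Gfun (q : PairSp) : ℝ × ℝ :=
  ((Matrix.trace (q.1.1 : M2)).re / 2,
    -(Matrix.trace ((q.1.1 : M2) * (q.1.2 : M2))).re / 2)

lemma Gfun_eq {q : PairSp} {α β : ℂ} {u : ℝ} {v : ℂ}
    (hA : (q.1.1 : M2) = mk2 α β) (ha : (q.1.2 : M2) = mk2 (u * Complex.I) v) :
    Gfun q = (α.re, u * α.im + (β * CC v).re) := by
  unfold Gfun
  rw [hA, ha, mul_mk2, trace_mk2, trace_mk2]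
  refine Prod.ext ?_ ?_ <;> simp <;> ring

lemma Gfun_mem (q : PairSp) : (Gfun q).1 ^ 2 + (Gfun q).2 ^ 2 ≤ 1 := by
  obtain ⟨α, β, hn, hA⟩ := su2_form q.1.1.2
  obtain ⟨u, v, hn2, ha⟩ := traceless_form q.1.2.2 q.2
  rw [Gfun_eq hA ha]
  simp only [Complex.normSq_apply] at hn hn2
  simp [Complex.mul_re]
  nlinarith [sq_nonneg (u * β.re - v.re * α.im), sq_nonneg (u * β.im - v.im * α.im),
    sq_nonneg (v.re * β.im - v.im * β.re), sq_nonneg α.re, sq_nonneg α.im]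

/-- the disk -/
abbrev D2 := {v : ℝ × ℝ // v.1 ^ 2 + v.2 ^ 2 ≤ 1}

lemma canonDiskA_eq (x y : ℝ) :
    canonDiskA x y = mk2 (x + y * Complex.I) (Real.sqrt (1 - x ^ 2 - y ^ 2) * Complex.I) := by
  ext i j
  fin_cases i <;> fin_cases j <;>
    simp [canonDiskA, mk2, σx, σz, Matrix.one_apply] <;>
    (apply Complex.ext <;> simp <;> ring)

lemma canonDiskA_mem {x y : ℝ} (h : x ^ 2 + y ^ 2 ≤ 1) : canonDiskA x y ∈ SU2 := by
  rw [canonDiskA_eq]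
  apply mk2_mem
  have hs : Real.sqrt (1 - x ^ 2 - y ^ 2) ^ 2 = 1 - x ^ 2 - y ^ 2 :=
    Real.sq_sqrt (by linarith)
  simp [Complex.normSq_apply]
  nlinarith [hs]

/-- the canonical pair -/
def canonPair (p : D2) : PairSp :=
  ⟨(⟨canonDiskA p.1.1 p.1.2, canonDiskA_mem p.2⟩, ⟨Complex.I • σz, iσz_mem⟩), trace_iσz⟩

lemma Gfun_canonPair (p : D2) : Gfun (canonPair p) = p.1 := by
  have h1 : ((canonPair p).1.1 : M2) = mk2 (p.1.1 + p.1.2 * Complex.I)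
      (Real.sqrt (1 - p.1.1 ^ 2 - p.1.2 ^ 2) * Complex.I) := canonDiskA_eq _ _
  have h2 : ((canonPair p).1.2 : M2) = mk2 ((1 : ℝ) * Complex.I) 0 := by
    show Complex.I • σz = _
    rw [iσz_eq]; norm_num
  rw [Gfun_eq h1 h2]
  apply Prod.ext <;> simp

lemma su2_star_mem {g : M2} (h : g ∈ SU2) : star g ∈ SU2 := by
  obtain ⟨α, β, hn, rfl⟩ := su2_form h
  rw [star_mk2]
  apply mk2_mem
  simpa using hn

lemma su2_inv_eq_star (g : SU2) : (g : M2)⁻¹ = star (g : M2) := by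
  apply Matrix.inv_eq_right_inv
  exact Matrix.mem_unitaryGroup_iff.mp (Matrix.mem_specialUnitaryGroup_iff.mp g.2).1

lemma mk2_congr {a b c d : ℂ} (h1 : a = c) (h2 : b = d) : mk2 a b = mk2 c d := by
  rw [h1, h2]

/-- Step 1: any traceless SU(2) element can be moved to `iσz`. -/
lemma step1 (u : ℝ) (v : ℂ) (hn : u ^ 2 + normSq v = 1) :
    ∃ g : SU2, mk2 (u * Complex.I) v * (g : M2) = (g : M2) * (Complex.I • σz) := by
  by_cases hu : u = 1
  · have hv : v = 0 := by
      have : normSq v = 0 := by rw [hu] at hn; linarith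
      exact normSq_eq_zero.mp this
    refine ⟨1, ?_⟩
    rw [hu, hv, iσz_eq]
    norm_num
  · have hv2 : normSq v = 1 - u ^ 2 := by linarith
    have hu1 : u < 1 := by
      rcases lt_or_eq_of_le (show u ≤ 1 by nlinarith [normSq_nonneg v]) with h | h
      · exact h
      · exact absurd h hu
    set N : ℝ := Real.sqrt (2 * (1 - u)) with hN
    have hNpos : 0 < N := Real.sqrt_pos.mpr (by linarith)
    have hN2 : N ^ 2 = 2 * (1 - u) := Real.sq_sqrt (by linarith)
    have hNC : (N : ℂ) ≠ 0 := by exact_mod_cast hNpos.ne'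
    have hmem : mk2 (v / N) (Complex.I * (1 - u) / N) ∈ SU2 := by
      apply mk2_mem
      have h1 : normSq ((N : ℂ)) = N ^ 2 := by
        simp [Complex.normSq_apply]; ring
      rw [normSq_div, normSq_div, h1, hN2]
      have h2 : normSq (Complex.I * (1 - u)) = (1 - u) ^ 2 := by
        have : (Complex.I * ((1 : ℂ) - u)) = Complex.I * ((((1 - u) : ℝ)) : ℂ) := by
          push_cast; ring
        rw [this, normSq_mul]
        simp [Complex.normSq_apply]
        ring
      rw [h2, hv2, ← add_div,
        show (1 : ℝ) - u ^ 2 + (1 - u) ^ 2 = 2 * (1 - u) by ring,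
        div_self (by linarith : (2 : ℝ) * (1 - u) ≠ 0)]
    refine ⟨⟨_, hmem⟩, ?_⟩
    show mk2 (u * Complex.I) v * mk2 (v / N) (Complex.I * (1 - u) / N) = _
    rw [iσz_eq, mul_mk2, mul_mk2]
    have hvv : v * CC v = ((1 - u ^ 2 : ℝ) : ℂ) := by
      rw [Complex.mul_conj, hv2]
    apply mk2_congr
    · simp only [map_div₀, map_mul, map_sub, map_one, Complex.conj_I, Complex.conj_ofReal, map_zero]
      field_simp
      ring
    · simp only [map_div₀, map_mul, map_sub, map_one, Complex.conj_I, Complex.conj_ofReal, map_zero]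
      field_simp
      push_cast at hvv ⊢
      linear_combination hvv + (1 - (u : ℂ) ^ 2) * Complex.I_sq
  
/-- helper to conclude `conjRel2` from "swap" equations. -/
lemma conj_of_swap {q : PairSp} {p : D2} (g : SU2)
    (h1 : (q.1.1 : M2) * (g : M2) = (g : M2) * canonDiskA p.1.1 p.1.2)
    (h2 : (q.1.2 : M2) * (g : M2) = (g : M2) * (Complex.I • σz)) :
    conjRel2 (canonPair p) q := by
  refine ⟨g, ?_, ?_⟩
  · show (g : M2) * canonDiskA p.1.1 p.1.2 * (g : M2)⁻¹ = (q.1.1 : M2)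
    rw [← h1, Matrix.mul_assoc, su2_mul_inv, Matrix.mul_one]
  · show (g : M2) * (Complex.I • σz) * (g : M2)⁻¹ = (q.1.2 : M2)
    rw [← h2, Matrix.mul_assoc, su2_mul_inv, Matrix.mul_one]

lemma trace_mul_iσz (α β : ℂ) :
    Matrix.trace (mk2 α β * (Complex.I • σz)) = -2 * α.im := by
  rw [iσz_eq, mul_mk2]
  have h0 : α * Complex.I - β * CC 0 = α * Complex.I := by simp
  rw [h0, trace_mk2]
  simp

/-- main normal form theorem -/
lemma conj_canon (q : PairSp) :
    conjRel2 (canonPair ⟨Gfun q, Gfun_mem q⟩) q := by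
  obtain ⟨α, β, hn, hA⟩ := su2_form q.1.1.2
  obtain ⟨u, v, hn2, ha⟩ := traceless_form q.1.2.2 q.2
  set x : ℝ := α.re with hx
  set y : ℝ := u * α.im + (β * CC v).re with hy
  have hG : Gfun q = (x, y) := Gfun_eq hA ha
  -- step 1
  obtain ⟨g₁, hg₁⟩ := step1 u v hn2
  -- conjugated first matrix
  set A' : M2 := (star (g₁ : M2)) * ((q.1.1 : M2) * (g₁ : M2)) with hA'
  have hA'mem : A' ∈ SU2 := mul_mem (su2_star_mem g₁.2) (mul_mem q.1.1.2 g₁.2)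
  have hrel1 : (q.1.1 : M2) * (g₁ : M2) = (g₁ : M2) * A' := by
    rw [hA', ← Matrix.mul_assoc, ← su2_inv_eq_star, su2_mul_inv, one_mul]
  obtain ⟨α', β', hn', hform⟩ := su2_form hA'mem
  -- traces
  have htr1 : Matrix.trace A' = Matrix.trace (q.1.1 : M2) := by
    rw [hA', ← su2_inv_eq_star, Matrix.trace_mul_comm, Matrix.mul_assoc,
      su2_mul_inv, Matrix.mul_one]
  have htr2 : Matrix.trace (A' * (Complex.I • σz)) =
      Matrix.trace ((q.1.1 : M2) * (q.1.2 : M2)) := by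
    have : A' * (Complex.I • σz) =
        (star (g₁ : M2)) * (((q.1.1 : M2) * (q.1.2 : M2)) * (g₁ : M2)) := by
      rw [hA']
      have h2 : (g₁ : M2) * (Complex.I • σz) = (q.1.2 : M2) * (g₁ : M2) := by
        rw [← hg₁, ha]
      calc (star (g₁ : M2)) * ((q.1.1 : M2) * (g₁ : M2)) * (Complex.I • σz)
          = (star (g₁ : M2)) * ((q.1.1 : M2) * ((g₁ : M2) * (Complex.I • σz))) := by
            simp only [Matrix.mul_assoc]
        _ = _ := by rw [h2]; simp only [Matrix.mul_assoc]
    rw [this, ← su2_inv_eq_star, Matrix.trace_mul_comm, Matrix.mul_assoc,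
      su2_mul_inv, Matrix.mul_one]
  -- identify α'
  have hre' : α'.re = x := by
    rw [hform, trace_mk2, hA, trace_mk2] at htr1
    have := mul_left_cancel₀ (two_ne_zero' ℂ) htr1
    exact_mod_cast this
  have him' : α'.im = y := by
    have h2' : (-2 : ℂ) * α'.im = Matrix.trace ((q.1.1 : M2) * (q.1.2 : M2)) := by
      rw [← htr2, hform, trace_mul_iσz]
    have h3' : Matrix.trace ((q.1.1 : M2) * (q.1.2 : M2)) = ((-2 * y : ℝ) : ℂ) := by
      rw [hA, ha, mul_mk2, trace_mk2]
      have hre : (α * ((u : ℂ) * Complex.I) - β * CC v).re = -y := by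
        rw [hy]
        simp [Complex.mul_re]
        ring
      rw [hre]
      push_cast
      ring
    rw [h3'] at h2'
    have : ((-2 * α'.im : ℝ) : ℂ) = ((-2 * y : ℝ) : ℂ) := by push_cast; push_cast at h2'; linear_combination h2'
    have := Complex.ofReal_inj.mp this
    linarith
  have hα' : α' = (x : ℂ) + (y : ℂ) * Complex.I := by
    apply Complex.ext <;> simp [hre', him']
  have hnα' : normSq α' = x ^ 2 + y ^ 2 := by
    simp [Complex.normSq_apply, hre', him']
    ring
  have hβ'n : normSq β' = 1 - x ^ 2 - y ^ 2 := by
    rw [hnα'] at hn'; linarith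
  set s : ℝ := Real.sqrt (1 - x ^ 2 - y ^ 2) with hs
  have hs2 : s ^ 2 = 1 - x ^ 2 - y ^ 2 :=
    Real.sq_sqrt (by rw [← hβ'n]; exact normSq_nonneg β')
  have hsabs : s = ‖β'‖ := by
    rw [hs, ← hβ'n, Complex.norm_def]
  have hcanon : canonDiskA x y = mk2 ((x : ℂ) + (y : ℂ) * Complex.I) ((s : ℂ) * Complex.I) :=
    canonDiskA_eq x y
  have hG1 : (Gfun q).1 = x := by rw [hG]
  have hG2 : (Gfun q).2 = y := by rw [hG]
  by_cases hb : β' = 0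
  · -- boundary case : A' is already canonical
    have hs0 : s = 0 := by rw [hsabs, hb]; simp
    have hAc : A' = canonDiskA x y := by
      rw [hform, hcanon]
      apply mk2_congr hα'
      rw [hb, hs0]
      simp
    apply conj_of_swap g₁
    · show (q.1.1 : M2) * (g₁ : M2) = (g₁ : M2) * canonDiskA (Gfun q).1 (Gfun q).2
      rw [hG1, hG2, ← hAc, hrel1]
    · show (q.1.2 : M2) * (g₁ : M2) = (g₁ : M2) * (Complex.I • σz)
      rw [ha, hg₁]
  · -- interior case : rotate β' to i·s by a diagonal element
    obtain ⟨w, hw⟩ := IsAlgClosed.exists_pow_nat_eq (Complex.I * (s : ℂ) / β') two_pos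
    have hw1 : normSq w = 1 := by
      have h1 : normSq w ^ 2 = normSq (w ^ 2) := by rw [map_pow]
      have h2 : normSq (Complex.I * (s : ℂ) / β') = 1 := by
        rw [normSq_div, normSq_mul]
        have : normSq ((s : ℂ)) = s ^ 2 := by simp [Complex.normSq_apply]; ring
        have hnb : normSq β' ≠ 0 := fun h => hb (normSq_eq_zero.mp h)
        rw [this, hs2, ← hβ'n, Complex.normSq_I, one_mul, div_self hnb]
      rw [hw, h2] at h1
      nlinarith [normSq_nonneg w]
    have hwc : w * CC w = 1 := by
      rw [Complex.mul_conj, hw1]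
      norm_num
    have hβ'w : β' * w ^ 2 = Complex.I * (s : ℂ) := by
      rw [hw]
      field_simp
    have hg₂mem : mk2 (CC w) 0 ∈ SU2 := by
      apply mk2_mem
      simp [hw1]
    set g₂ : SU2 := ⟨mk2 (CC w) 0, hg₂mem⟩ with hg₂
    have hrel2 : A' * (g₂ : M2) = (g₂ : M2) * canonDiskA x y := by
      show A' * mk2 (CC w) 0 = mk2 (CC w) 0 * canonDiskA x y
      rw [hform, hcanon, mul_mk2, mul_mk2]
      apply mk2_congr
      · rw [hα']
        simp
        ring
      · simp only [mul_zero, zero_mul, zero_add, add_zero, Complex.conj_conj, map_zero, sub_zero]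
        linear_combination (starRingEnd ℂ w) * hβ'w - β' * w * hwc
    have hrel3 : (Complex.I • σz) * (g₂ : M2) = (g₂ : M2) * (Complex.I • σz) := by
      show (Complex.I • σz) * mk2 (CC w) 0 = mk2 (CC w) 0 * (Complex.I • σz)
      rw [iσz_eq, mul_mk2, mul_mk2]
      apply mk2_congr <;> ring
    set g : SU2 := ⟨(g₁ : M2) * (g₂ : M2), mul_mem g₁.2 hg₂mem⟩ with hgdef
    apply conj_of_swap g
    · show (q.1.1 : M2) * ((g₁ : M2) * (g₂ : M2)) =
          ((g₁ : M2) * (g₂ : M2)) * canonDiskA (Gfun q).1 (Gfun q).2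
      rw [hG1, hG2]
      calc (q.1.1 : M2) * ((g₁ : M2) * (g₂ : M2))
          = ((q.1.1 : M2) * (g₁ : M2)) * (g₂ : M2) := by rw [Matrix.mul_assoc]
        _ = (g₁ : M2) * (A' * (g₂ : M2)) := by rw [hrel1, Matrix.mul_assoc]
        _ = (g₁ : M2) * ((g₂ : M2) * canonDiskA x y) := by rw [hrel2]
        _ = ((g₁ : M2) * (g₂ : M2)) * canonDiskA x y := by rw [Matrix.mul_assoc]
    · show (q.1.2 : M2) * ((g₁ : M2) * (g₂ : M2)) = ((g₁ : M2) * (g₂ : M2)) * (Complex.I • σz)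
      calc (q.1.2 : M2) * ((g₁ : M2) * (g₂ : M2))
          = ((q.1.2 : M2) * (g₁ : M2)) * (g₂ : M2) := by rw [Matrix.mul_assoc]
        _ = (g₁ : M2) * ((Complex.I • σz) * (g₂ : M2)) := by
            rw [ha, hg₁, Matrix.mul_assoc]
        _ = (g₁ : M2) * ((g₂ : M2) * (Complex.I • σz)) := by rw [hrel3]
        _ = ((g₁ : M2) * (g₂ : M2)) * (Complex.I • σz) := by rw [Matrix.mul_assoc]



lemma conj_mul (g : SU2) (M N : M2) :
    ((g : M2) * M * (g : M2)⁻¹) * ((g : M2) * N * (g : M2)⁻¹) =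
      (g : M2) * (M * N) * (g : M2)⁻¹ := by
  have h := su2_inv_mul g
  calc ((g : M2) * M * (g : M2)⁻¹) * ((g : M2) * N * (g : M2)⁻¹)
      = (g : M2) * M * ((g : M2)⁻¹ * (g : M2)) * N * (g : M2)⁻¹ := by
        noncomm_ring
    _ = (g : M2) * (M * N) * (g : M2)⁻¹ := by rw [h]; noncomm_ring

lemma conj_sandwich (g : SU2) (M : M2) :
    (g : M2)⁻¹ * ((g : M2) * M * (g : M2)⁻¹) * (g : M2) = M := by
  simp only [← Matrix.mul_assoc]
  rw [su2_inv_mul, one_mul, Matrix.mul_assoc, su2_inv_mul, Matrix.mul_one]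

lemma conj_cancel (g : SU2) {M N : M2}
    (h : (g : M2) * M * (g : M2)⁻¹ = (g : M2) * N * (g : M2)⁻¹) : M = N := by
  calc M = (g : M2)⁻¹ * ((g : M2) * M * (g : M2)⁻¹) * (g : M2) := (conj_sandwich g M).symm
    _ = (g : M2)⁻¹ * ((g : M2) * N * (g : M2)⁻¹) * (g : M2) := by rw [h]
    _ = N := conj_sandwich g N

lemma conj_trace (g : SU2) (M : M2) :
    Matrix.trace ((g : M2) * M * (g : M2)⁻¹) = Matrix.trace M := by
  rw [Matrix.trace_mul_cycle, su2_inv_mul, one_mul]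

lemma Gfun_invariant {q q' : PairSp} (h : conjRel2 q q') : Gfun q = Gfun q' := by
  obtain ⟨g, hA, ha⟩ := h
  unfold Gfun
  rw [← hA, ← ha, conj_mul, conj_trace, conj_trace]

lemma comm_invariant {q q' : PairSp} (h : conjRel2 q q') :
    ((q.1.1 : M2) * q.1.2 = (q.1.2 : M2) * q.1.1) ↔
      ((q'.1.1 : M2) * q'.1.2 = (q'.1.2 : M2) * q'.1.1) := by
  obtain ⟨g, hA, ha⟩ := h
  rw [← hA, ← ha, conj_mul, conj_mul]
  constructor
  · intro hc; rw [hc]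
  · intro hc
    rw [conj_cancel g hc]

lemma comm_canonPair (p : D2) :
    (((canonPair p).1.1 : M2) * (canonPair p).1.2 =
      ((canonPair p).1.2 : M2) * (canonPair p).1.1) ↔ p.1.1 ^ 2 + p.1.2 ^ 2 = 1 := by
  obtain ⟨⟨x, y⟩, hp⟩ := p
  have h1 : ((canonPair ⟨(x, y), hp⟩).1.1 : M2) = mk2 (x + y * Complex.I)
      (Real.sqrt (1 - x ^ 2 - y ^ 2) * Complex.I) := canonDiskA_eq _ _
  have h2 : ((canonPair ⟨(x, y), hp⟩).1.2 : M2) = mk2 Complex.I 0 := iσz_eq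
  rw [h1, h2, mul_mk2, mul_mk2]
  set s := Real.sqrt (1 - x ^ 2 - y ^ 2) with hs
  constructor
  · intro hc
    have := congrFun (congrFun hc 0) 1
    simp only [mk2, Matrix.cons_val', Matrix.cons_val_zero, Matrix.cons_val_one,
      Matrix.head_cons, Matrix.empty_val', Matrix.cons_val_fin_one, Matrix.of_apply] at this
    have hs0 : s = 0 := by
      have h' : ((s : ℂ) * Complex.I) * CC Complex.I = Complex.I * ((s : ℂ) * Complex.I) := by
        simp only [Complex.conj_I] at this ⊢
        linear_combination this
      simp [Complex.ext_iff] at h'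
      linarith [h']
    have : (1 : ℝ) - x ^ 2 - y ^ 2 ≤ 0 := by
      by_contra hlt
      push_neg at hlt
      exact absurd hs0 (ne_of_gt (Real.sqrt_pos.mpr hlt))
    simp only []
    linarith
  · intro he
    have hs0 : s = 0 := by
      rw [hs, show (1 : ℝ) - x ^ 2 - y ^ 2 = 0 by simp only [] at he; linarith,
        Real.sqrt_zero]
    rw [hs0]
    norm_num
    congr 1
    ring

def Gd (q : PairSp) : D2 := ⟨Gfun q, Gfun_mem q⟩

lemma continuous_canonPair : Continuous canonPair := by
  apply Continuous.subtype_mk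
  apply Continuous.prodMk
  · apply Continuous.subtype_mk
    show Continuous fun p : D2 => canonDiskA p.1.1 p.1.2
    unfold canonDiskA
    apply Continuous.add
    apply Continuous.add
    · exact (Complex.continuous_ofReal.comp (continuous_fst.comp continuous_subtype_val)).smul
        continuous_const
    · apply Continuous.fun_smul _ continuous_const
      apply continuous_const.mul
      exact Complex.continuous_ofReal.comp (Real.continuous_sqrt.comp (by fun_prop))
    · apply Continuous.fun_smul _ continuous_const
      exact continuous_const.mul
        (Complex.continuous_ofReal.comp (continuous_snd.comp continuous_subtype_val))
  · exact continuous_const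

lemma continuous_coe1 : Continuous fun q : PairSp => (q.1.1 : M2) :=
  continuous_subtype_val.comp (continuous_fst.comp continuous_subtype_val)

lemma continuous_coe2 : Continuous fun q : PairSp => (q.1.2 : M2) :=
  continuous_subtype_val.comp (continuous_snd.comp continuous_subtype_val)

lemma continuous_Gd : Continuous Gd := by
  apply Continuous.subtype_mk
  show Continuous fun q : PairSp => Gfun q
  unfold Gfun
  apply Continuous.prodMk
  · exact ((Complex.continuous_re.comp continuous_coe1.matrix_trace).div_const 2)
  · exact ((Complex.continuous_re.comp
      (continuous_coe1.matrix_mul continuous_coe2).matrix_trace).neg.div_const 2)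

end DiskCV

open DiskCV in
/-- The space of conjugacy classes of pairs `(A,a) ∈ SU(2)²` with `tr a = 0` is
homeomorphic to the closed unit disk via `(x,y) ↦ [(A(x,y), iσz)]`; abelian pairs
correspond to the boundary circle and nonabelian pairs to the open disk. -/
theorem disk_character_variety :
    ∃ F : {v : ℝ × ℝ // v.1 ^ 2 + v.2 ^ 2 ≤ 1} ≃ₜ Quot conjRel2,
      (∀ (p : {v : ℝ × ℝ // v.1 ^ 2 + v.2 ^ 2 ≤ 1}) (q : PairSp),
        (q.1.1 : Matrix (Fin 2) (Fin 2) ℂ) = canonDiskA p.1.1 p.1.2 →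
        (q.1.2 : Matrix (Fin 2) (Fin 2) ℂ) = Complex.I • σz →
        F p = Quot.mk conjRel2 q) ∧
      (∀ (p : {v : ℝ × ℝ // v.1 ^ 2 + v.2 ^ 2 ≤ 1}) (q : PairSp),
        F p = Quot.mk conjRel2 q →
        (p.1.1 ^ 2 + p.1.2 ^ 2 = 1 ↔
          (q.1.1 : Matrix (Fin 2) (Fin 2) ℂ) * q.1.2 =
            (q.1.2 : Matrix (Fin 2) (Fin 2) ℂ) * q.1.1)) := by
  have hGd_lift : ∀ q q' : PairSp, conjRel2 q q' → Gd q = Gd q' := by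
    intro q q' h
    exact Subtype.ext (Gfun_invariant h)
  let E : DiskCV.D2 ≃ Quot conjRel2 :=
    { toFun := fun p => Quot.mk conjRel2 (canonPair p)
      invFun := Quot.lift Gd hGd_lift
      left_inv := by
        intro p
        show Gd (canonPair p) = p
        exact Subtype.ext (Gfun_canonPair p)
      right_inv := by
        apply Quot.ind
        intro q
        show Quot.mk conjRel2 (canonPair (Gd q)) = Quot.mk conjRel2 q
        exact Quot.sound (conj_canon q) }
  refine ⟨⟨E, continuous_quot_mk.comp continuous_canonPair,
      continuous_quot_lift _ continuous_Gd⟩, ?_, ?_⟩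
  · intro p q h1 h2
    have : canonPair p = q := by
      apply Subtype.ext
      apply Prod.ext <;> apply Subtype.ext
      · exact h1.symm
      · exact h2.symm
    show Quot.mk conjRel2 (canonPair p) = Quot.mk conjRel2 q
    rw [this]
  · intro p q h
    have h' : Quot.mk conjRel2 (canonPair p) = Quot.mk conjRel2 q := h
    rw [Quot.eq] at h'
    have key : ∀ q q' : PairSp, Relation.EqvGen conjRel2 q q' →
        (((q.1.1 : Matrix (Fin 2) (Fin 2) ℂ) * q.1.2 = (q.1.2 : Matrix (Fin 2) (Fin 2) ℂ) * q.1.1) ↔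
          ((q'.1.1 : Matrix (Fin 2) (Fin 2) ℂ) * q'.1.2 = (q'.1.2 : Matrix (Fin 2) (Fin 2) ℂ) * q'.1.1)) := by
      intro a b hab
      induction hab with
      | rel _ _ h => exact comm_invariant h
      | refl _ => exact Iff.rfl
      | symm _ _ _ ih => exact ih.symm
      | trans _ _ _ _ _ ih1 ih2 => exact ih1.trans ih2
    rw [← (comm_canonPair p), key _ _ h']
end
end

section
/- The set of conjugacy classes of triples (A, a, h) ∈ SU(2)³ with tr(a) = tr(h) = 0 and ha = -ah (no condition on A), under simultaneous conjugation, is homeomorphic to S³ = {(z₁,z₂) ∈ ℂ² : |z₁|² + |z₂|² = 1}: every such triple has a unique representative with a = iσ_z, h = iσ_x, and A the matrix with first column (z₁, z₂) and second column (-z̄₂, z̄₁). -/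
open Matrix

noncomputable section

/-- Triples `(A, a, h) ∈ SU(2)³` with `tr a = tr h = 0` and `ha = -ah`. -/
def TripleSp : Type :=
  {t : SU2 × SU2 × SU2 //
    Matrix.trace (t.2.1 : Matrix (Fin 2) (Fin 2) ℂ) = 0 ∧
    Matrix.trace (t.2.2 : Matrix (Fin 2) (Fin 2) ℂ) = 0 ∧
    (t.2.2 : Matrix (Fin 2) (Fin 2) ℂ) * t.2.1 =
      -((t.2.1 : Matrix (Fin 2) (Fin 2) ℂ) * t.2.2)}

/-- Simultaneous conjugation relation on such triples. -/
def conjRel3 (t t' : TripleSp) : Prop :=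
  ∃ g : SU2,
    (g : Matrix (Fin 2) (Fin 2) ℂ) * t.1.1 * (g : Matrix (Fin 2) (Fin 2) ℂ)⁻¹ =
      (t'.1.1 : Matrix (Fin 2) (Fin 2) ℂ) ∧
    (g : Matrix (Fin 2) (Fin 2) ℂ) * t.1.2.1 * (g : Matrix (Fin 2) (Fin 2) ℂ)⁻¹ =
      (t'.1.2.1 : Matrix (Fin 2) (Fin 2) ℂ) ∧
    (g : Matrix (Fin 2) (Fin 2) ℂ) * t.1.2.2 * (g : Matrix (Fin 2) (Fin 2) ℂ)⁻¹ =
      (t'.1.2.2 : Matrix (Fin 2) (Fin 2) ℂ)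

instance : TopologicalSpace TripleSp := instTopologicalSpaceSubtype

/-- `S³ = {(z₁,z₂) ∈ ℂ² : |z₁|² + |z₂|² = 1}`. -/
def Sph3 : Type :=
  {z : ℂ × ℂ // ‖z.1‖ ^ 2 + ‖z.2‖ ^ 2 = 1}

instance : TopologicalSpace Sph3 := instTopologicalSpaceSubtype

/-! ### Auxiliary material -/

namespace CV

abbrev M2 := Matrix (Fin 2) (Fin 2) ℂ

abbrev G : Submonoid M2 := Matrix.specialUnitaryGroup (Fin 2) ℂ

local notation "𝓒" => starRingEnd ℂ

/-- The generic element of SU(2). -/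
def Mz (a c : ℂ) : M2 := !![a, -𝓒 c; c, 𝓒 a]

def Bm : M2 := !![Complex.I, 0; 0, -Complex.I]
def Cm : M2 := !![0, Complex.I; Complex.I, 0]

lemma fin2_ext {a b c d e f g h : ℂ} (h1 : a = e) (h2 : b = f) (h3 : c = g) (h4 : d = h) :
    !![a,b;c,d] = !![e,f;g,h] := by
  ext i j; fin_cases i <;> fin_cases j <;> simp [h1,h2,h3,h4]

lemma fin2_entry {A B : M2} (h : A = B) (i j : Fin 2) : A i j = B i j := by rw [h]

lemma star_fin_two (a b c d : ℂ) : star !![a,b;c,d] = !![𝓒 a, 𝓒 c; 𝓒 b, 𝓒 d] := by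
  ext i j; fin_cases i <;> fin_cases j <;> simp [Matrix.conjTranspose_apply]

lemma smul_fin_two (r a b c d : ℂ) : r • !![a,b;c,d] = !![r*a,r*b;r*c,r*d] := by
  ext i j; fin_cases i <;> fin_cases j <;> simp

lemma neg_fin_two (a b c d : ℂ) : -!![a,b;c,d] = !![-a,-b;-c,-d] := by
  ext i j; fin_cases i <;> fin_cases j <;> simp

lemma add_fin_two (a b c d e f g h : ℂ) :
    !![a,b;c,d] + !![e,f;g,h] = !![a+e, b+f; c+g, d+h] := by
  ext i j; fin_cases i <;> fin_cases j <;> simp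

lemma one_fin_two' : (1 : M2) = !![1,0;0,1] := by
  ext i j; fin_cases i <;> fin_cases j <;> simp [Matrix.one_apply]

lemma neg_one_fin_two : (-1 : M2) = !![-1,0;0,-1] := by
  rw [one_fin_two', neg_fin_two]; norm_num

lemma smul_one_fin_two (r : ℂ) : r • (1 : M2) = !![r,0;0,r] := by
  rw [one_fin_two', smul_fin_two]; norm_num

/-! Membership basics -/

lemma Gstar_mul {g : M2} (h : g ∈ G) : star g * g = 1 := h.1.1
lemma Gmul_star {g : M2} (h : g ∈ G) : g * star g = 1 := h.1.2
lemma Gdet {g : M2} (h : g ∈ G) : g.det = 1 := h.2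

lemma Gmk {g : M2} (h1 : star g * g = 1) (h2 : g * star g = 1) (h3 : g.det = 1) : g ∈ G :=
  ⟨⟨h1, h2⟩, h3⟩

lemma Gstar_mem {g : M2} (h : g ∈ G) : star g ∈ G := by
  refine ⟨Unitary.star_mem h.1, ?_⟩
  have h2 : g.det = 1 := h.2
  show (star g).det = 1
  calc (star g).det = star g.det := g.det_conjTranspose
    _ = 1 := by rw [h2]; simp

lemma Ginv_coe {g : M2} (h : g ∈ G) : g⁻¹ = star g := Matrix.inv_eq_left_inv (Gstar_mul h)

/-- Characterization of SU(2) elements. -/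
lemma su2_form {M : M2} (h : M ∈ G) :
    ∃ a c : ℂ, M = Mz a c ∧ a * 𝓒 a + c * 𝓒 c = 1 := by
  have hdet : M.det = 1 := h.2
  have hinv : M⁻¹ = star M := Matrix.inv_eq_left_inv h.1.1
  have hadj : star M = M.adjugate := by
    rw [Matrix.inv_def, hdet] at hinv; simpa using hinv.symm
  have h11 : M 1 1 = 𝓒 (M 0 0) := by
    have := congrFun (congrFun hadj 0) 0
    simp [Matrix.conjTranspose_apply, Matrix.adjugate_fin_two] at this
    exact this.symm
  have h01 : M 0 1 = -𝓒 (M 1 0) := by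
    have := congrFun (congrFun hadj 0) 1
    simp [Matrix.conjTranspose_apply, Matrix.adjugate_fin_two] at this
    linear_combination this
  refine ⟨M 0 0, M 1 0, ?_, ?_⟩
  · conv_lhs => rw [Matrix.eta_fin_two M]
    rw [h11, h01]; rfl
  · have hd := Matrix.det_fin_two M
    rw [hdet, h11, h01] at hd
    linear_combination -hd

lemma star_Mz (a c : ℂ) : star (Mz a c) = Mz (𝓒 a) (-c) := by
  rw [Mz, Mz, star_fin_two]
  exact fin2_ext rfl (by simp) (by simp) (by simp)

lemma G_of_form {a c : ℂ} (h : a * 𝓒 a + c * 𝓒 c = 1) : Mz a c ∈ G := by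
  refine Gmk ?_ ?_ ?_
  · rw [star_Mz, Mz, Mz, Matrix.mul_fin_two, one_fin_two']
    refine fin2_ext ?_ ?_ ?_ ?_ <;> (try simp) <;>
      first | ring1 | linear_combination h | linear_combination -h
  · rw [star_Mz, Mz, Mz, Matrix.mul_fin_two, one_fin_two']
    refine fin2_ext ?_ ?_ ?_ ?_ <;> (try simp) <;>
      first | ring1 | linear_combination h | linear_combination -h
  · rw [Mz, Matrix.det_fin_two_of]; linear_combination h

lemma Bm_Mz : Bm = Mz Complex.I 0 := by
  rw [Bm, Mz]; exact fin2_ext rfl (by simp) rfl (by simp)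

lemma Cm_Mz : Cm = Mz 0 Complex.I := by
  rw [Cm, Mz]; exact fin2_ext rfl (by simp) rfl (by simp)

lemma Bm_mem : Bm ∈ G := by
  rw [Bm_Mz]; exact G_of_form (by simp)

lemma Cm_mem : Cm ∈ G := by
  rw [Cm_Mz]; exact G_of_form (by simp)

lemma Bm_smul : Complex.I • σz = Bm := by
  rw [σz, Bm, smul_fin_two]; norm_num

lemma Cm_smul : Complex.I • σx = Cm := by
  rw [σx, Cm, smul_fin_two]; norm_num

lemma trace_Bm : Bm.trace = 0 := by rw [Bm, Matrix.trace_fin_two_of]; ring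

lemma trace_Cm : Cm.trace = 0 := by rw [Cm, Matrix.trace_fin_two_of]; ring

lemma anti_CB : Cm * Bm = -(Bm * Cm) := by
  rw [Bm, Cm, Matrix.mul_fin_two, Matrix.mul_fin_two, neg_fin_two]
  exact fin2_ext (by ring) (by ring) (by ring) (by ring)

/-- Square of a traceless SU(2) element is `-1`. -/
lemma Mz_sq {p q : ℂ} (hp : 𝓒 p = -p) (hd : p * 𝓒 p + q * 𝓒 q = 1) :
    Mz p q * Mz p q = -1 := by
  rw [Mz, Matrix.mul_fin_two, neg_one_fin_two]
  refine fin2_ext ?_ ?_ ?_ ?_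
  · linear_combination p * hp - hd
  · linear_combination (-(𝓒 q)) * hp
  · linear_combination q * hp
  · linear_combination (𝓒 p) * hp - hd

lemma Bm_sq : Bm * Bm = -1 := by
  rw [Bm_Mz]; exact Mz_sq (by simp) (by simp)

lemma star_Mz_traceless {p q : ℂ} (hp : 𝓒 p = -p) : star (Mz p q) = -(Mz p q) := by
  rw [star_Mz, Mz, Mz, neg_fin_two]
  exact fin2_ext (by rw [hp]) (by simp) (by simp) (by simp [hp])

lemma star_Bm : star Bm = -Bm := by
  rw [Bm_Mz]; exact star_Mz_traceless (by simp)

/-! Conjugation helpers -/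

lemma conj_mul {g : M2} (hg : star g * g = 1) (x y : M2) :
    (g * x * star g) * (g * y * star g) = g * (x * y) * star g := by
  calc (g * x * star g) * (g * y * star g)
      = g * (x * ((star g * g) * (y * star g))) := by simp only [Matrix.mul_assoc]
    _ = g * (x * y) * star g := by rw [hg, Matrix.one_mul]; simp only [Matrix.mul_assoc]

lemma conj_cancel {g : M2} (hg : star g * g = 1) (x : M2) :
    star g * (g * x * star g) * g = x := by
  calc star g * (g * x * star g) * g
      = (star g * g) * (x * (star g * g)) := by simp only [Matrix.mul_assoc]
    _ = x := by rw [hg, Matrix.mul_one, Matrix.one_mul]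

lemma conj_trace {g : M2} (hg : star g * g = 1) (x : M2) :
    (g * x * star g).trace = x.trace := by
  rw [Matrix.trace_mul_comm, ← Matrix.mul_assoc, hg, Matrix.one_mul]

/-! ### Step A: conjugating `a` to `Bm` -/

lemma stepA {p q : ℂ} {hM : M2} (hp : 𝓒 p = -p) (hd : p * 𝓒 p + q * 𝓒 q = 1)
    (hh : hM ∈ G) (anti : hM * Mz p q = -(Mz p q * hM)) :
    ∃ g ∈ G, g * Mz p q * star g = Bm := by
  by_cases hc : Mz p q = -Bm
  · refine ⟨hM, hh, ?_⟩
    have hBm : -(Mz p q) = Bm := by rw [hc, neg_neg]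
    calc hM * Mz p q * star hM = -(Mz p q * hM) * star hM := by rw [anti]
      _ = (-(Mz p q)) * (hM * star hM) := by
          rw [Matrix.neg_mul, Matrix.neg_mul, Matrix.mul_assoc]
      _ = Bm := by rw [hBm, Gmul_star hh, Matrix.mul_one]
  · -- the generic case
    have hre : p.re = 0 := by
      have := congrArg Complex.re hp
      simp [Complex.conj_re] at this
      linarith [this]
    have hnq : (Complex.normSq p : ℂ) + (Complex.normSq q : ℂ) = 1 := by
      rw [← Complex.mul_conj, ← Complex.mul_conj]; exact hd
    have hr : Complex.normSq p + Complex.normSq q = 1 := by exact_mod_cast hnq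
    have hnp : Complex.normSq p = p.im ^ 2 := by
      rw [Complex.normSq_apply, hre]; ring
    have him : p.im ≠ -1 := by
      intro h1
      apply hc
      have hq0 : Complex.normSq q = 0 := by rw [hnp, h1] at hr; nlinarith
      have hq : q = 0 := by
        rwa [Complex.normSq_eq_zero] at hq0
      have hpI : p = -Complex.I := by
        apply Complex.ext <;> simp [hre, h1]
      rw [Mz, hq, hpI, Bm, neg_fin_two]
      exact fin2_ext rfl (by simp) (by simp) (by simp)
    have hge : -1 ≤ p.im := by nlinarith [Complex.normSq_nonneg q]
    have hgt : -1 < p.im := lt_of_le_of_ne hge (fun h => him h.symm)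
    set d : ℝ := 2 + 2 * p.im with hd'
    have hdpos : 0 < d := by simp only [hd']; linarith
    set s : ℝ := (Real.sqrt d)⁻¹ with hs'
    have hsd : (s : ℂ) ^ 2 * (d : ℂ) = 1 := by
      have h1 : s ^ 2 * d = 1 := by
        rw [hs', inv_pow, Real.sq_sqrt hdpos.le]
        field_simp
      calc (s:ℂ)^2 * (d:ℂ) = ((s^2*d : ℝ) : ℂ) := by push_cast; ring
        _ = 1 := by rw [h1]; norm_num
    have hIp : Complex.I * p = -(p.im : ℂ) := by
      apply Complex.ext <;> simp [Complex.mul_re, Complex.mul_im, hre]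
    have hdc : (d : ℂ) = 2 - 2 * Complex.I * p := by
      rw [hd']
      push_cast
      rw [mul_assoc, hIp]
      ring
    set m : M2 := Mz p q + Bm with hm'
    have hmE : m = !![p + Complex.I, -𝓒 q; q, 𝓒 p - Complex.I] := by
      rw [hm', Mz, Bm, add_fin_two]
      exact fin2_ext rfl (by ring) (by ring) (by ring)
    have hstarm : star m = -m := by
      rw [hm', star_add, star_Mz_traceless hp, star_Bm, neg_add]
    have hMzsq : Mz p q * Mz p q = -1 := Mz_sq hp hd
    have hmm : m * m = (2 * Complex.I * p - 2) • (1 : M2) := by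
      rw [hmE, Matrix.mul_fin_two, smul_one_fin_two]
      refine fin2_ext ?_ ?_ ?_ ?_
      · linear_combination p * hp - hd + Complex.I_mul_I
      · linear_combination (-(𝓒 q)) * hp
      · linear_combination q * hp
      · linear_combination (𝓒 p - 2*Complex.I) * hp - hd + Complex.I_mul_I
    have hdetm : m.det = (d : ℂ) := by
      rw [hmE, Matrix.det_fin_two_of, hdc]
      linear_combination hd + Complex.I * hp - Complex.I_mul_I
    have hmMz : m * Mz p q = Bm * m := by
      rw [hm', Matrix.add_mul, Matrix.mul_add, hMzsq, Bm_sq]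
      exact add_comm _ _
    have hstar : star ((s : ℂ) • m) = (s : ℂ) • (-m) := by
      rw [star_smul, hstarm]
      congr 1
      simp [Complex.conj_ofReal]
    have hmm' : -(m * m) = (d : ℂ) • (1 : M2) := by
      rw [hmm, ← neg_smul]
      congr 1
      rw [hdc]; ring
    have hss1 : (s : ℂ) * (s : ℂ) * (d : ℂ) = 1 := by linear_combination hsd
    have hms : star ((s:ℂ) • m) * ((s:ℂ) • m) = 1 := by
      rw [hstar, Matrix.smul_mul, Matrix.mul_smul, smul_smul, Matrix.neg_mul, hmm',
        smul_smul, hss1, one_smul]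
    have hsm : ((s:ℂ) • m) * star ((s:ℂ) • m) = 1 := by
      rw [hstar, Matrix.smul_mul, Matrix.mul_smul, smul_smul, Matrix.mul_neg, hmm',
        smul_smul, hss1, one_smul]
    refine ⟨(s : ℂ) • m, Gmk hms hsm ?_, ?_⟩
    · rw [Matrix.det_smul, hdetm]
      simpa using hsd
    · rw [hstar, Matrix.smul_mul, Matrix.smul_mul, Matrix.mul_smul, smul_smul]
      have hkey : (m * Mz p q) * -m = (d : ℂ) • Bm := by
        rw [hmMz, Matrix.mul_neg, Matrix.mul_assoc, hmm, Matrix.mul_smul, Matrix.mul_one,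
          ← neg_smul]
        congr 1
        rw [hdc]; ring
      rw [hkey, smul_smul, hss1, one_smul]

/-! ### Step B: conjugating `h` to `Cm` fixing `Bm` -/

lemma stepB {hM : M2} (hmem : hM ∈ G) (tr : hM.trace = 0) (anti : hM * Bm = -(Bm * hM)) :
    ∃ g ∈ G, g * Bm * star g = Bm ∧ g * hM * star g = Cm := by
  obtain ⟨r, s, hform, hdet⟩ := su2_form hmem
  have hr0 : r = 0 := by
    rw [hform, Mz, Bm, Matrix.mul_fin_two, Matrix.mul_fin_two, neg_fin_two] at anti
    have h00 := fin2_entry anti 0 0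
    simp at h00
    have h2 : r * (2 * Complex.I) = 0 := by linear_combination h00
    rcases mul_eq_zero.mp h2 with h | h
    · exact h
    · exfalso
      simp [Complex.ext_iff] at h
  have hss : s * 𝓒 s = 1 := by
    rw [hr0] at hdet; simpa using hdet
  obtain ⟨l, hl⟩ := IsAlgClosed.exists_pow_nat_eq (-Complex.I * s) (n := 2) (by norm_num)
  have hl' : (𝓒 l) ^ 2 = Complex.I * 𝓒 s := by
    rw [← map_pow, hl, _root_.map_mul, _root_.map_neg, Complex.conj_I]
    ring
  have hll : l * 𝓒 l = 1 := by
    have h2 : ((Complex.normSq l : ℂ)) ^ 2 = 1 := by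
      rw [← Complex.mul_conj, mul_pow, hl, hl']
      linear_combination hss + (-(s * 𝓒 s)) * Complex.I_mul_I
    have h3 : (Complex.normSq l) ^ 2 = 1 := by exact_mod_cast h2
    have h4 : Complex.normSq l = 1 := by nlinarith [Complex.normSq_nonneg l]
    rw [Complex.mul_conj, h4]; simp
  refine ⟨Mz l 0, G_of_form (by simpa using hll), ?_, ?_⟩
  · rw [star_Mz]
    rw [Mz, Bm, Mz]
    simp only [map_zero, neg_zero, Complex.conj_conj]
    rw [Matrix.mul_fin_two, Matrix.mul_fin_two]
    refine fin2_ext ?_ ?_ ?_ ?_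
    · linear_combination Complex.I * hll
    · ring
    · ring
    · linear_combination (-Complex.I) * hll
  · rw [star_Mz, hform, hr0]
    rw [Mz, Mz, Mz, Cm]
    simp only [map_zero, neg_zero, Complex.conj_conj]
    rw [Matrix.mul_fin_two, Matrix.mul_fin_two]
    refine fin2_ext ?_ ?_ ?_ ?_
    · ring
    · linear_combination (-(𝓒 s)) * hl + Complex.I * hss
    · linear_combination s * hl' + Complex.I * hss
    · ring

/-! ### Full normalization -/

lemma normalize {aM hM : M2} (ha : aM ∈ G) (hh : hM ∈ G) (ta : aM.trace = 0)
    (th : hM.trace = 0) (anti : hM * aM = -(aM * hM)) :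
    ∃ g ∈ G, g * aM * star g = Bm ∧ g * hM * star g = Cm := by
  obtain ⟨p, q, hform, hdet⟩ := su2_form ha
  have hp : 𝓒 p = -p := by
    rw [hform, Mz, Matrix.trace_fin_two_of] at ta
    linear_combination ta
  rw [hform] at anti ⊢
  obtain ⟨g₁, hg₁, hg₁a⟩ := stepA hp hdet hh anti
  set h₁ : M2 := g₁ * hM * star g₁ with hh₁
  have hmem₁ : h₁ ∈ G := mul_mem (mul_mem hg₁ hh) (Gstar_mem hg₁)
  have htr₁ : h₁.trace = 0 := by
    rw [hh₁, conj_trace (Gstar_mul hg₁)]; exact th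
  have hanti₁ : h₁ * Bm = -(Bm * h₁) := by
    rw [hh₁, ← hg₁a, conj_mul (Gstar_mul hg₁), conj_mul (Gstar_mul hg₁), anti]
    rw [Matrix.mul_neg, Matrix.neg_mul]
  obtain ⟨g₂, hg₂, hg₂B, hg₂C⟩ := stepB hmem₁ htr₁ hanti₁
  refine ⟨g₂ * g₁, mul_mem hg₂ hg₁, ?_, ?_⟩
  · rw [Matrix.star_mul]
    calc (g₂ * g₁) * Mz p q * (star g₁ * star g₂)
        = g₂ * (g₁ * Mz p q * star g₁) * star g₂ := by simp only [Matrix.mul_assoc]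
      _ = Bm := by rw [hg₁a]; exact hg₂B
  · rw [Matrix.star_mul]
    calc (g₂ * g₁) * hM * (star g₁ * star g₂)
        = g₂ * (g₁ * hM * star g₁) * star g₂ := by simp only [Matrix.mul_assoc]
      _ = Cm := by rw [← hh₁]; exact hg₂C


/-! ### Canonical representatives and the equivalence relation -/

def bS : SU2 := ⟨Bm, Bm_mem⟩
def cS : SU2 := ⟨Cm, Cm_mem⟩

lemma sphere_of {a c : ℂ} (h : a * 𝓒 a + c * 𝓒 c = 1) :
    ‖a‖ ^ 2 + ‖c‖ ^ 2 = 1 := by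
  have h1 : ((Complex.normSq a + Complex.normSq c : ℝ) : ℂ) = 1 := by
    push_cast
    rw [← Complex.mul_conj, ← Complex.mul_conj]
    exact h
  have h2 : Complex.normSq a + Complex.normSq c = 1 := by exact_mod_cast h1
  rw [Complex.sq_norm, Complex.sq_norm]
  exact h2

lemma form_of_sphere {a c : ℂ} (h : ‖a‖ ^ 2 + ‖c‖ ^ 2 = 1) :
    a * 𝓒 a + c * 𝓒 c = 1 := by
  rw [Complex.mul_conj, Complex.mul_conj]
  have h2 : Complex.normSq a + Complex.normSq c = 1 := by
    rw [← Complex.sq_norm, ← Complex.sq_norm]; exact h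
  exact_mod_cast h2

def eT (z : Sph3) : TripleSp :=
  ⟨(⟨Mz z.1.1 z.1.2, G_of_form (form_of_sphere z.2)⟩, bS, cS),
    trace_Bm, trace_Cm, anti_CB⟩

lemma rel_iff (t t' : TripleSp) : conjRel3 t t' ↔
    ∃ g, ∃ _ : g ∈ G, g * (t.1.1 : M2) * star g = t'.1.1 ∧
      g * (t.1.2.1 : M2) * star g = t'.1.2.1 ∧
      g * (t.1.2.2 : M2) * star g = t'.1.2.2 := by
  constructor
  · rintro ⟨g, h1, h2, h3⟩
    rw [Ginv_coe g.2] at h1 h2 h3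
    exact ⟨g, g.2, h1, h2, h3⟩
  · rintro ⟨g, hg, h1, h2, h3⟩
    refine ⟨⟨g, hg⟩, ?_, ?_, ?_⟩ <;>
      rw [show ((⟨g, hg⟩ : SU2) : M2) = g from rfl, Ginv_coe hg] <;> assumption

lemma conjRel3_equiv : Equivalence conjRel3 := by
  constructor
  · intro t
    refine (rel_iff t t).mpr ⟨1, one_mem G, ?_, ?_, ?_⟩ <;> simp
  · intro t t' h
    obtain ⟨g, hg, h1, h2, h3⟩ := (rel_iff t t').mp h
    refine (rel_iff t' t).mpr ⟨star g, Gstar_mem hg, ?_, ?_, ?_⟩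
    · rw [star_star, ← h1]; exact conj_cancel (Gstar_mul hg) _
    · rw [star_star, ← h2]; exact conj_cancel (Gstar_mul hg) _
    · rw [star_star, ← h3]; exact conj_cancel (Gstar_mul hg) _
  · intro t t' t'' h h'
    obtain ⟨g, hg, h1, h2, h3⟩ := (rel_iff t t').mp h
    obtain ⟨g', hg', k1, k2, k3⟩ := (rel_iff t' t'').mp h'
    refine (rel_iff t t'').mpr ⟨g' * g, mul_mem hg' hg, ?_, ?_, ?_⟩
    · rw [Matrix.star_mul]
      calc g' * g * (t.1.1 : M2) * (star g * star g')
          = g' * (g * (t.1.1 : M2) * star g) * star g' := by simp only [Matrix.mul_assoc]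
        _ = _ := by rw [h1]; exact k1
    · rw [Matrix.star_mul]
      calc g' * g * (t.1.2.1 : M2) * (star g * star g')
          = g' * (g * (t.1.2.1 : M2) * star g) * star g' := by simp only [Matrix.mul_assoc]
        _ = _ := by rw [h2]; exact k2
    · rw [Matrix.star_mul]
      calc g' * g * (t.1.2.2 : M2) * (star g * star g')
          = g' * (g * (t.1.2.2 : M2) * star g) * star g' := by simp only [Matrix.mul_assoc]
        _ = _ := by rw [h3]; exact k3

/-- Rigidity: the canonical representative is unique. -/
lemma rigid {z z' : Sph3} (h : conjRel3 (eT z) (eT z')) : z = z' := by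
  obtain ⟨g, hg, h1, h2, h3⟩ := (rel_iff _ _).mp h
  change g * Mz z.1.1 z.1.2 * star g = Mz z'.1.1 z'.1.2 at h1
  change g * Bm * star g = Bm at h2
  change g * Cm * star g = Cm at h3
  obtain ⟨u, v, hgf, hgd⟩ := su2_form hg
  have hBg : g * Bm = Bm * g := by
    have h4 := congrArg (fun X => X * g) h2
    simp only [Matrix.mul_assoc, Gstar_mul hg, Matrix.mul_one] at h4
    exact h4
  have hCg : g * Cm = Cm * g := by
    have h4 := congrArg (fun X => X * g) h3
    simp only [Matrix.mul_assoc, Gstar_mul hg, Matrix.mul_one] at h4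
    exact h4
  rw [hgf] at hBg hCg h1
  have hv : v = 0 := by
    rw [Mz, Bm, Matrix.mul_fin_two, Matrix.mul_fin_two] at hBg
    have e01 := fin2_entry hBg 0 1
    simp at e01
    have h5 : 𝓒 v * (2 * Complex.I) = 0 := by linear_combination e01
    rcases mul_eq_zero.mp h5 with hzz | hzz
    · calc v = 𝓒 (𝓒 v) := (Complex.conj_conj v).symm
        _ = 0 := by rw [hzz]; simp
    · exfalso; simp [Complex.ext_iff] at hzz
  rw [hv] at hgf hgd h1 hCg
  have huu : u * 𝓒 u = 1 := by simpa using hgd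
  have hu : 𝓒 u = u := by
    rw [Mz, Cm, Matrix.mul_fin_two, Matrix.mul_fin_two] at hCg
    have e01 := fin2_entry hCg 0 1
    simp at e01
    have h5 : (u - 𝓒 u) * Complex.I = 0 := by linear_combination e01
    rcases mul_eq_zero.mp h5 with hzz | hzz
    · linear_combination -hzz
    · exact absurd hzz Complex.I_ne_zero
  rw [star_Mz] at h1
  rw [Mz, Mz, Mz, Mz, Matrix.mul_fin_two, Matrix.mul_fin_two] at h1
  have e00 := fin2_entry h1 0 0
  have e10 := fin2_entry h1 1 0
  simp at e00 e10
  have hz1 : z.1.1 = z'.1.1 := by linear_combination e00 - z.1.1 * huu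
  have hz2 : z.1.2 = z'.1.2 := by
    linear_combination e10 - (z.1.2 * 𝓒 u) * hu - z.1.2 * huu
  apply Subtype.ext
  rw [Prod.ext_iff]
  exact ⟨hz1, hz2⟩

/-- Every triple is conjugate to a canonical representative. -/
lemma part1 (t : TripleSp) : ∃ z : Sph3, conjRel3 t (eT z) := by
  obtain ⟨g, hg, hga, hgh⟩ :=
    normalize t.1.2.1.2 t.1.2.2.2 t.2.1 t.2.2.1 t.2.2.2
  have memA : g * (t.1.1 : M2) * star g ∈ G :=
    mul_mem (mul_mem hg t.1.1.2) (Gstar_mem hg)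
  obtain ⟨z₁, z₂, hform, hdet⟩ := su2_form memA
  exact ⟨⟨(z₁, z₂), sphere_of hdet⟩, (rel_iff _ _).mpr ⟨g, hg, hform, hga, hgh⟩⟩

/-! ### The conjugation action -/

def act (gt : SU2 × TripleSp) : TripleSp :=
  ⟨(⟨(gt.1 : M2) * gt.2.1.1 * star (gt.1 : M2),
      mul_mem (mul_mem gt.1.2 gt.2.1.1.2) (Gstar_mem gt.1.2)⟩,
    ⟨(gt.1 : M2) * gt.2.1.2.1 * star (gt.1 : M2),
      mul_mem (mul_mem gt.1.2 gt.2.1.2.1.2) (Gstar_mem gt.1.2)⟩,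
    ⟨(gt.1 : M2) * gt.2.1.2.2 * star (gt.1 : M2),
      mul_mem (mul_mem gt.1.2 gt.2.1.2.2.2) (Gstar_mem gt.1.2)⟩),
    by rw [conj_trace (Gstar_mul gt.1.2)]; exact gt.2.2.1,
    by rw [conj_trace (Gstar_mul gt.1.2)]; exact gt.2.2.2.1,
    by
      rw [conj_mul (Gstar_mul gt.1.2), conj_mul (Gstar_mul gt.1.2), gt.2.2.2.2]
      rw [Matrix.mul_neg, Matrix.neg_mul]⟩

lemma act_rel (g : SU2) (t : TripleSp) : conjRel3 t (act (g, t)) :=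
  (rel_iff _ _).mpr ⟨(g : M2), g.2, rfl, rfl, rfl⟩

lemma rel_act {t t' : TripleSp} (h : conjRel3 t t') : ∃ g : SU2, act (g, t) = t' := by
  obtain ⟨g, hg, h1, h2, h3⟩ := (rel_iff t t').mp h
  refine ⟨⟨g, hg⟩, ?_⟩
  apply Subtype.ext
  rw [Prod.ext_iff]
  refine ⟨Subtype.ext h1, ?_⟩
  rw [Prod.ext_iff]
  exact ⟨Subtype.ext h2, Subtype.ext h3⟩

/-! ### Topological facts -/

lemma eT_continuous : Continuous eT := by
  apply Continuous.subtype_mk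
  refine Continuous.prodMk (Continuous.subtype_mk ?_ _) continuous_const
  have c1 : Continuous (fun z : Sph3 => z.1.1) := continuous_fst.comp continuous_subtype_val
  have c2 : Continuous (fun z : Sph3 => z.1.2) := continuous_snd.comp continuous_subtype_val
  apply continuous_matrix
  intro i j
  fin_cases i <;> fin_cases j <;> simp only [Mz] <;> simp <;>
    first
      | exact c1
      | exact c2
      | exact (Complex.continuous_conj.comp c2).neg
      | exact Complex.continuous_conj.comp c1

lemma act_continuous : Continuous act := by
  have hg : Continuous (fun gt : SU2 × TripleSp => (gt.1 : M2)) :=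
    continuous_subtype_val.comp continuous_fst
  have ht : Continuous (fun gt : SU2 × TripleSp => (gt.2.1 : SU2 × SU2 × SU2)) :=
    continuous_subtype_val.comp continuous_snd
  have h1 : Continuous (fun gt : SU2 × TripleSp => (gt.2.1.1 : M2)) :=
    continuous_subtype_val.comp (continuous_fst.comp ht)
  have h2 : Continuous (fun gt : SU2 × TripleSp => (gt.2.1.2.1 : M2)) :=
    continuous_subtype_val.comp (continuous_fst.comp (continuous_snd.comp ht))
  have h3 : Continuous (fun gt : SU2 × TripleSp => (gt.2.1.2.2 : M2)) :=
    continuous_subtype_val.comp (continuous_snd.comp (continuous_snd.comp ht))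
  apply Continuous.subtype_mk
  refine Continuous.prodMk (Continuous.subtype_mk ?_ _)
    (Continuous.prodMk (Continuous.subtype_mk ?_ _) (Continuous.subtype_mk ?_ _))
  · exact (hg.matrix_mul h1).matrix_mul hg.star
  · exact (hg.matrix_mul h2).matrix_mul hg.star
  · exact (hg.matrix_mul h3).matrix_mul hg.star

lemma Gclosed : IsClosed (G : Set M2) := by
  have h : (G : Set M2) =
      {M | star M * M = 1} ∩ ({M | M * star M = 1} ∩ {M | M.det = 1}) := by
    ext M
    constructor
    · intro h; exact ⟨Gstar_mul h, Gmul_star h, Gdet h⟩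
    · rintro ⟨h1, h2, h3⟩; exact Gmk h1 h2 h3
  rw [h]
  refine IsClosed.inter ?_ (IsClosed.inter ?_ ?_)
  · exact isClosed_eq (continuous_star.matrix_mul continuous_id) continuous_const
  · exact isClosed_eq (continuous_id.matrix_mul continuous_star) continuous_const
  · exact isClosed_eq continuous_id.matrix_det continuous_const

lemma Gcompact : IsCompact (G : Set M2) := by
  have hK : IsCompact ((Set.univ.pi fun _ : Fin 2 =>
      (Set.univ.pi fun _ : Fin 2 => Metric.closedBall (0:ℂ) 1)) : Set M2) :=
    isCompact_univ_pi fun _ => isCompact_univ_pi fun _ => isCompact_closedBall _ _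
  refine IsCompact.of_isClosed_subset hK Gclosed ?_
  intro M hM
  obtain ⟨a, c, hform, hdet⟩ := su2_form hM
  have hsph := sphere_of hdet
  have ha : ‖a‖ ≤ 1 := by
    nlinarith [norm_nonneg a, norm_nonneg c, sq_nonneg ‖c‖]
  have hc : ‖c‖ ≤ 1 := by
    nlinarith [norm_nonneg a, norm_nonneg c, sq_nonneg ‖a‖]
  intro i _
  intro j _
  rw [hform, Mz]
  fin_cases i <;> fin_cases j <;>
    simp [Metric.mem_closedBall, Complex.dist_eq] <;> assumption

instance : CompactSpace SU2 := isCompact_iff_compactSpace.mp Gcompact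

instance : T2Space TripleSp :=
  inferInstanceAs (T2Space {t : SU2 × SU2 × SU2 //
    Matrix.trace (t.2.1 : M2) = 0 ∧ Matrix.trace (t.2.2 : M2) = 0 ∧
    (t.2.2 : M2) * t.2.1 = -((t.2.1 : M2) * t.2.2)})

instance : CompactSpace Sph3 := by
  have hS : IsCompact {z : ℂ × ℂ | ‖z.1‖ ^ 2 + ‖z.2‖ ^ 2 = 1} := by
    apply Metric.isCompact_of_isClosed_isBounded
    · exact isClosed_eq (((continuous_norm.comp continuous_fst).pow 2).add
        ((continuous_norm.comp continuous_snd).pow 2)) continuous_const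
    · apply Bornology.IsBounded.subset (Metric.isBounded_closedBall (x := (0 : ℂ × ℂ)) (r := 1))
      intro z hz
      simp only [Set.mem_setOf_eq] at hz
      have h1 : ‖z.1‖ ≤ 1 := by
        nlinarith [norm_nonneg z.1, norm_nonneg z.2, sq_nonneg ‖z.2‖]
      have h2 : ‖z.2‖ ≤ 1 := by
        nlinarith [norm_nonneg z.1, norm_nonneg z.2, sq_nonneg ‖z.1‖]
      rw [Metric.mem_closedBall, dist_zero_right, Prod.norm_def]
      exact max_le h1 h2
  exact isCompact_iff_compactSpace.mp hS

end CV

/-- The set of conjugacy classes of triples `(A,a,h)` with `tr a = tr h = 0`,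
`ha = -ah`, is homeomorphic to `S³`: every such triple has a unique representative
with `a = iσz`, `h = iσx`, `A = !![z₁, -z̄₂; z₂, z̄₁]`. -/
theorem triple_character_variety_sphere :
    (∀ t : TripleSp, ∃! z : Sph3, ∃ t' : TripleSp, conjRel3 t t' ∧
      (t'.1.1 : Matrix (Fin 2) (Fin 2) ℂ) =
        !![z.1.1, -(starRingEnd ℂ) z.1.2; z.1.2, (starRingEnd ℂ) z.1.1] ∧
      (t'.1.2.1 : Matrix (Fin 2) (Fin 2) ℂ) = Complex.I • σz ∧
      (t'.1.2.2 : Matrix (Fin 2) (Fin 2) ℂ) = Complex.I • σx) ∧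
    Nonempty (Quot conjRel3 ≃ₜ Sph3) := by
  have hequiv := CV.conjRel3_equiv
  have hiff : ∀ (t : TripleSp) (z : Sph3),
      (∃ t' : TripleSp, conjRel3 t t' ∧
        (t'.1.1 : Matrix (Fin 2) (Fin 2) ℂ) =
          !![z.1.1, -(starRingEnd ℂ) z.1.2; z.1.2, (starRingEnd ℂ) z.1.1] ∧
        (t'.1.2.1 : Matrix (Fin 2) (Fin 2) ℂ) = Complex.I • σz ∧
        (t'.1.2.2 : Matrix (Fin 2) (Fin 2) ℂ) = Complex.I • σx) ↔ conjRel3 t (CV.eT z) := by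
    intro t z
    constructor
    · rintro ⟨t', hrel, hA, hB, hC⟩
      have ht' : t' = CV.eT z := by
        apply Subtype.ext
        rw [Prod.ext_iff]
        constructor
        · exact Subtype.ext hA
        · rw [Prod.ext_iff]
          constructor
          · exact Subtype.ext (by rw [hB, CV.Bm_smul]; rfl)
          · exact Subtype.ext (by rw [hC, CV.Cm_smul]; rfl)
      rwa [ht'] at hrel
    · intro hrel
      exact ⟨CV.eT z, hrel, rfl, CV.Bm_smul.symm, CV.Cm_smul.symm⟩
  have huniq : ∀ t : TripleSp, ∃! z : Sph3, conjRel3 t (CV.eT z) := by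
    intro t
    obtain ⟨z, hz⟩ := CV.part1 t
    exact ⟨z, hz, fun y hy => CV.rigid (hequiv.trans (hequiv.symm hy) hz)⟩
  constructor
  · intro t
    obtain ⟨z, hz, hy⟩ := huniq t
    exact ⟨z, (hiff t z).mpr hz, fun y hyy => hy y ((hiff t y).mp hyy)⟩
  · -- the homeomorphism
    set φ : Sph3 → Quot conjRel3 := fun z => Quot.mk conjRel3 (CV.eT z) with hφ
    have hφc : Continuous φ := continuous_quot_mk.comp CV.eT_continuous
    have hinj : Function.Injective φ := fun z z' h =>
      CV.rigid (hequiv.eqvGen_iff.mp (Quot.eq.mp h))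
    have hsurj : Function.Surjective φ := by
      intro x
      induction x using Quot.ind with
      | _ t =>
        obtain ⟨z, hz⟩ := CV.part1 t
        exact ⟨z, (Quot.sound hz).symm⟩
    let E : Sph3 ≃ Quot conjRel3 := Equiv.ofBijective φ ⟨hinj, hsurj⟩
    have hclosed : IsClosedMap φ := by
      intro C hC
      have hCcomp : IsCompact C := hC.isCompact
      have hsat : Quot.mk conjRel3 ⁻¹' (φ '' C) = CV.act '' (Set.univ ×ˢ (CV.eT '' C)) := by
        ext t
        simp only [Set.mem_preimage, Set.mem_image]
        constructor
        · rintro ⟨z, hzC, hz⟩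
          have hrel : conjRel3 (CV.eT z) t := hequiv.eqvGen_iff.mp (Quot.eq.mp hz)
          obtain ⟨g, hg⟩ := CV.rel_act hrel
          exact ⟨(g, CV.eT z), Set.mem_prod.mpr ⟨trivial, ⟨z, hzC, rfl⟩⟩, hg⟩
        · rintro ⟨⟨g, s⟩, hmem, hact⟩
          obtain ⟨z, hzC, hs⟩ := (Set.mem_prod.mp hmem).2
          refine ⟨z, hzC, ?_⟩
          rw [← hact]
          have : s = CV.eT z := hs.symm
          rw [this]
          exact Quot.sound (CV.act_rel g (CV.eT z))
      have hcomp2 : IsCompact (CV.act '' (Set.univ ×ˢ (CV.eT '' C))) :=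
        (isCompact_univ.prod (hCcomp.image CV.eT_continuous)).image CV.act_continuous
      rw [← isQuotientMap_quot_mk.isClosed_preimage, hsat]
      exact hcomp2.isClosed
    have hEsymm : Continuous E.symm := by
      rw [continuous_iff_isClosed]
      intro C hC
      have himg : E.symm ⁻¹' C = φ '' C := by
        rw [← Equiv.image_eq_preimage_symm]
        rfl
      rw [himg]
      exact hclosed C hC
    exact ⟨Homeomorph.mk E.symm hEsymm hφc⟩
end
end

section
/- For ν, θ ∈ ℝ with cos²ν + sin²ν sin²θ > 0, let h = (cos²ν + sin²ν sin²θ)^{-1/2}(i σ_x cos ν - i σ_z sin ν sin θ) and a = i σ_z and B = cos ν + i sin ν (σ_x cos θ + σ_y sin θ). Then h ∈ SU(2), tr(h) = 0, and h anticommutes with aB: h(aB) = -(aB)h. -/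
open Matrix Real

noncomputable section

/-- With `h = (cos²ν + sin²ν sin²θ)^{-1/2}(i σx cos ν - i σz sin ν sin θ)`,
`a = i σz`, `B = cos ν + i sin ν (σx cos θ + σy sin θ)`: `h ∈ SU(2)`, `tr h = 0`,
and `h` anticommutes with `aB`. -/
theorem h_in_SU2_traceless_anticommutes (ν θ : ℝ)
    (hpos : 0 < cos ν ^ 2 + sin ν ^ 2 * sin θ ^ 2)
    (h a B : Matrix (Fin 2) (Fin 2) ℂ)
    (hh : h = (((cos ν ^ 2 + sin ν ^ 2 * sin θ ^ 2) ^ (-(1 : ℝ) / 2) : ℝ) : ℂ) •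
      ((Complex.I * (cos ν : ℂ)) • σx - (Complex.I * ((sin ν * sin θ : ℝ) : ℂ)) • σz))
    (hA : a = Complex.I • σz)
    (hB : B = ((cos ν : ℝ) : ℂ) • (1 : Matrix (Fin 2) (Fin 2) ℂ) +
      (Complex.I * ((sin ν : ℝ) : ℂ)) •
        (((cos θ : ℝ) : ℂ) • σx + ((sin θ : ℝ) : ℂ) • σy)) :
    h ∈ Matrix.specialUnitaryGroup (Fin 2) ℂ ∧
    Matrix.trace h = 0 ∧
    h * (a * B) = -((a * B) * h) := by
  have hkeyR : ((cos ν ^ 2 + sin ν ^ 2 * sin θ ^ 2) ^ (-(1 : ℝ) / 2)) ^ 2 *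
      (cos ν ^ 2 + sin ν ^ 2 * sin θ ^ 2) = 1 := by
    rw [← Real.rpow_natCast ((cos ν ^ 2 + sin ν ^ 2 * sin θ ^ 2) ^ (-(1 : ℝ) / 2)) 2,
      ← Real.rpow_mul hpos.le]
    norm_num
    rw [Real.rpow_neg_one]
    field_simp
  set c : ℂ := (((cos ν ^ 2 + sin ν ^ 2 * sin θ ^ 2) ^ (-(1 : ℝ) / 2) : ℝ) : ℂ) with hc
  set C : ℂ := ((cos ν : ℝ) : ℂ) with hC
  set S : ℂ := ((sin ν : ℝ) : ℂ) with hS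
  set ct : ℂ := ((cos θ : ℝ) : ℂ) with hct
  set st : ℂ := ((sin θ : ℝ) : ℂ) with hst
  have hkey : c ^ 2 * (C ^ 2 + S ^ 2 * st ^ 2) = 1 := by
    have := congrArg (Complex.ofReal) hkeyR
    push_cast at this
    rw [hc, hC, hS, hst]
    push_cast
    exact this
  have hcconj : (starRingEnd ℂ) c = c := Complex.conj_ofReal _
  have hCconj : (starRingEnd ℂ) C = C := Complex.conj_ofReal _
  have hSconj : (starRingEnd ℂ) S = S := Complex.conj_ofReal _
  have hstconj : (starRingEnd ℂ) st = st := Complex.conj_ofReal _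
  have hI : Complex.I ^ 2 = -1 := Complex.I_sq
  have hh2 : h = !![-(c * Complex.I * S * st), c * Complex.I * C;
      c * Complex.I * C, c * Complex.I * S * st] := by
    subst hh
    ext i j
    fin_cases i <;> fin_cases j <;>
      simp [σx, σz, hC, hS, hst] <;>
      push_cast <;> ring
  have haB : a * B = !![Complex.I * C, Complex.I * S * st - S * ct;
      Complex.I * S * st + S * ct, -(Complex.I * C)] := by
    subst hA hB
    ext i j
    fin_cases i <;> fin_cases j <;>
      simp [σx, σy, σz, Matrix.mul_apply, Fin.sum_univ_two, Matrix.one_apply]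
    all_goals
      first
      | ring1
      | linear_combination (S * ct - Complex.I * S * st) * hI
      | linear_combination (-(S * ct) - Complex.I * S * st) * hI
  clear_value c C S ct st
  refine ⟨Matrix.mem_specialUnitaryGroup_iff.mpr
      ⟨Matrix.mem_unitaryGroup_iff.mpr ?_, ?_⟩, ?_, ?_⟩
  · rw [hh2]
    ext i j
    fin_cases i <;> fin_cases j <;>
      simp [Matrix.mul_apply, Fin.sum_univ_two, Matrix.conjTranspose_apply,
        Matrix.one_apply, hcconj, hCconj, hSconj, hstconj, Complex.conj_I]
    all_goals
      first
      | ring1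
      | linear_combination (-(c ^ 2 * (C ^ 2 + S ^ 2 * st ^ 2))) * hI + hkey
  · rw [hh2, Matrix.det_fin_two_of]
    linear_combination (-(c ^ 2 * (C ^ 2 + S ^ 2 * st ^ 2))) * hI + hkey
  · rw [hh2, Matrix.trace_fin_two_of]
    ring
  · rw [hh2, haB]
    ext i j
    fin_cases i <;> fin_cases j <;>
      simp [Matrix.mul_apply, Fin.sum_univ_two, Matrix.neg_apply] <;>
      ring
end
end
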